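/- arXiv:1307.6576 — 7 statements merged into one kernel-verified Lean document; each statement's English description precedes it below -/
import Mathlib

section
/- Let U be a positive bounded linear operator on the space of continuous periodic functions (with the pointwise order), let φ be a strictly positive fixed point of U (Uφ = φ, φ(x) > 0 for all x). If ψ satisfies (I - U)ψ = γφ for some real γ, then γ = 0 and hence (I-U)²ψ = 0 implies (I-U)ψ = 0. -/
set_option maxHeartbeats 1000000


open MeasureTheory

/-- If `U` is a positive bounded linear operator on the space of continuous
(time- and space-) periodic functions, `φ` a strictly positive fixed point of `U`, and
`(I - U) ψ = γ • φ`, then `γ = 0` and hence `(I - U) ψ = 0`. -/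
theorem positive_operator_fixed_point_forces_zero {N : ℕ} (T : ℝ) (hT : 0 < T)
    (p : Fin N → ℝ) (hp : ∀ i, 0 < p i)
    (U : BoundedContinuousFunction (ℝ × EuclideanSpace ℝ (Fin N)) ℝ →L[ℝ]
         BoundedContinuousFunction (ℝ × EuclideanSpace ℝ (Fin N)) ℝ)
    (hUpos : ∀ u : BoundedContinuousFunction (ℝ × EuclideanSpace ℝ (Fin N)) ℝ,
      (∀ a, 0 ≤ u a) → ∀ a, 0 ≤ U u a)
    (φ ψ : BoundedContinuousFunction (ℝ × EuclideanSpace ℝ (Fin N)) ℝ)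
    (hφperT : ∀ t x, φ (t + T, x) = φ (t, x))
    (hφperx : ∀ t x i, φ (t, x + p i • EuclideanSpace.single i (1 : ℝ)) = φ (t, x))
    (hψperT : ∀ t x, ψ (t + T, x) = ψ (t, x))
    (hψperx : ∀ t x i, ψ (t, x + p i • EuclideanSpace.single i (1 : ℝ)) = ψ (t, x))
    (hUφ : U φ = φ) (hφpos : ∀ a, 0 < φ a)
    (γ : ℝ) (hψ : ψ - U ψ = γ • φ) :
    γ = 0 ∧ ψ - U ψ = 0 := by
  classical
  set E := EuclideanSpace ℝ (Fin N) with hE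
  set v : Fin N → E := fun i => p i • EuclideanSpace.single i (1 : ℝ) with hv
  -- integer translates in space leave φ invariant
  have hzsmul : ∀ (i : Fin N) (k : ℤ) (t : ℝ) (x : E),
      φ (t, x + (k : ℝ) • v i) = φ (t, x) := by
    intro i k
    induction k using Int.induction_on with
    | zero => intro t x; simp
    | succ n ih =>
        intro t x
        push_cast
        rw [add_smul, one_smul, ← add_assoc]
        rw [hφperx t (x + (n : ℝ) • v i) i]
        have := ih t x
        push_cast at this
        exact this
    | pred n ih =>
        intro t x
        push_cast
        have h1 : φ (t, x + (-(n : ℝ) - 1) • v i) = φ (t, x + (-(n : ℝ) - 1) • v i + v i) := by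
          rw [hφperx t (x + (-(n : ℝ) - 1) • v i) i]
        rw [h1]
        have h2 : x + (-(n : ℝ) - 1) • v i + v i = x + (-(n : ℝ)) • v i := by
          rw [sub_smul, one_smul]; abel
        rw [h2]
        have := ih t x
        push_cast at this
        exact this
  -- reduction of a point to the fundamental domain
  have hreduce : ∀ (t : ℝ) (x : E), ∃ (t' : ℝ) (x' : E),
      t' ∈ Set.Icc 0 T ∧ (∀ i, x' i ∈ Set.Icc 0 (p i)) ∧ φ (t', x') = φ (t, x) := by
    intro t x
    set k : Fin N → ℤ := fun i => ⌊x i / p i⌋ with hk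
    set x' : E := x - ∑ i, ((k i : ℝ)) • v i with hx'
    have hxeq : ∀ (s : Finset (Fin N)) (y : E) (tt : ℝ),
        φ (tt, y - ∑ i ∈ s, ((k i : ℝ)) • v i) = φ (tt, y) := by
      intro s
      induction s using Finset.induction_on with
      | empty => intro y tt; simp
      | insert _ _ hnotmem ih =>
          rename_i j s'
          intro y tt
          rw [Finset.sum_insert hnotmem]
          have h3 : y - (((k j : ℝ)) • v j + ∑ i ∈ s', ((k i : ℝ)) • v i)
              = (y - ((k j : ℝ)) • v j) - ∑ i ∈ s', ((k i : ℝ)) • v i := by abel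
          rw [h3, ih]
          have h4 := hzsmul j (-(k j)) tt y
          push_cast at h4
          rw [← h4]
          congr 1
          rw [neg_smul]
          abel
    have hφx' : φ (t, x') = φ (t, x) := hxeq Finset.univ x t
    have hx'mem : ∀ i, x' i ∈ Set.Icc 0 (p i) := by
      intro i
      have happ : x' i = x i - (k i : ℝ) * p i := by
        rw [hx']
        have hsum : (∑ j, ((k j : ℝ)) • v j) i = (k i : ℝ) * p i := by
          have hterm : ∀ j, (((k j : ℝ)) • v j) i
              = if i = j then (k j : ℝ) * p j else 0 := by
            intro j
            simp only [hv]
            rw [PiLp.smul_apply, PiLp.smul_apply, EuclideanSpace.single_apply]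
            simp [smul_eq_mul, mul_ite]
          have : (∑ j, ((k j : ℝ)) • v j) i = ∑ j, (((k j : ℝ)) • v j) i := by
            rw [WithLp.ofLp_sum]; exact Finset.sum_apply i Finset.univ _
          rw [this]
          simp only [hterm]
          rw [Finset.sum_ite_eq Finset.univ i (fun j => (k j : ℝ) * p j)]
          simp
        rw [PiLp.sub_apply, hsum]
      have hfr : x i - (k i : ℝ) * p i = Int.fract (x i / p i) * p i := by
        rw [Int.fract, sub_mul, div_mul_cancel₀ _ (hp i).ne']
      rw [happ, hfr]
      constructor
      · exact mul_nonneg (Int.fract_nonneg _) (hp i).le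
      · nlinarith [Int.fract_lt_one (x i / p i), Int.fract_nonneg (x i / p i), hp i]
    have hper : Function.Periodic (fun s => φ (s, x')) T := fun s => hφperT s x'
    refine ⟨t - ⌊t / T⌋ * T, x', ?_, hx'mem, ?_⟩
    · have hfr : t - (⌊t / T⌋ : ℝ) * T = Int.fract (t / T) * T := by
        rw [Int.fract, sub_mul, div_mul_cancel₀ _ hT.ne']
      rw [hfr]
      constructor
      · exact mul_nonneg (Int.fract_nonneg _) hT.le
      · nlinarith [Int.fract_lt_one (t / T), Int.fract_nonneg (t / T)]
    · have := hper.sub_int_mul_eq (x := t) ⌊t / T⌋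
      simpa using this.trans hφx'
  -- φ has a positive lower bound
  obtain ⟨m, hm0, hmle⟩ : ∃ m : ℝ, 0 < m ∧ ∀ a : ℝ × E, m ≤ φ a := by
    set Kx : Set E := (fun y : Fin N → ℝ => (WithLp.equiv 2 (Fin N → ℝ)).symm y) ''
      (Set.univ.pi fun i => Set.Icc 0 (p i)) with hKx
    have hKxc : IsCompact Kx :=
      (isCompact_univ_pi fun i => isCompact_Icc).image (PiLp.continuous_toLp 2 _)
    have hKc : IsCompact (Set.Icc (0:ℝ) T ×ˢ Kx) := isCompact_Icc.prod hKxc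
    have hKne : (Set.Icc (0:ℝ) T ×ˢ Kx).Nonempty := by
      refine ⟨(0, (WithLp.equiv 2 (Fin N → ℝ)).symm fun _ => 0), ⟨le_refl 0, hT.le⟩, ?_⟩
      exact ⟨fun _ => 0, fun i _ => ⟨le_refl 0, (hp i).le⟩, rfl⟩
    obtain ⟨a₀, _, ha₀⟩ := hKc.exists_isMinOn hKne (φ.continuous.continuousOn)
    refine ⟨φ a₀, hφpos a₀, ?_⟩
    rintro ⟨t, x⟩
    obtain ⟨t', x', ht', hx', heq⟩ := hreduce t x
    rw [← heq]
    refine ha₀ ⟨ht', ?_⟩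
    exact ⟨fun i => x' i, fun i _ => hx' i, rfl⟩
  -- main positivity argument: no positive γ' can occur
  have main : ∀ (ψ' : BoundedContinuousFunction (ℝ × E) ℝ) (γ' : ℝ),
      ψ' - U ψ' = γ' • φ → ¬ (0 < γ') := by
    intro ψ' γ' h hγ'
    set c : ℝ := ‖ψ'‖ / m with hc
    have hc0 : 0 ≤ c := div_nonneg (norm_nonneg _) hm0.le
    have hcm : c * m = ‖ψ'‖ := div_mul_cancel₀ _ hm0.ne'
    set w : BoundedContinuousFunction (ℝ × E) ℝ := ψ' + c • φ with hw
    have hUψ' : U ψ' = ψ' - γ' • φ := by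
      rw [← h]; abel
    have hiter : ∀ n : ℕ, (fun u => U u)^[n] w = ψ' - ((n : ℝ) * γ') • φ + c • φ := by
      intro n
      induction n with
      | zero => simp [hw]
      | succ n ih =>
          rw [Function.iterate_succ_apply', ih]
          simp only [map_add, map_sub, _root_.map_smul, hUφ, hUψ']
          push_cast
          module
    have hwpos : ∀ n : ℕ, ∀ a, 0 ≤ ((fun u => U u)^[n] w) a := by
      intro n
      induction n with
      | zero =>
          intro a
          simp only [Function.iterate_zero_apply, hw, BoundedContinuousFunction.coe_add,
            BoundedContinuousFunction.coe_smul, Pi.add_apply, Pi.smul_apply, smul_eq_mul]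
          have h1 : |ψ' a| ≤ ‖ψ'‖ := by
            simpa [Real.norm_eq_abs] using ψ'.norm_coe_le_norm a
          have h2 : c * m ≤ c * φ a := mul_le_mul_of_nonneg_left (hmle a) hc0
          rw [hcm] at h2
          have h3 := (abs_le.mp h1).1
          linarith
      | succ n ih =>
          rw [Function.iterate_succ_apply']
          exact hUpos _ ih
    obtain ⟨n, hn⟩ := exists_nat_gt ((‖ψ'‖ + c * ‖φ‖) / (γ' * m))
    have hγm : 0 < γ' * m := mul_pos hγ' hm0
    have key := hwpos n (0, 0)
    rw [hiter n] at key
    simp only [BoundedContinuousFunction.coe_add, BoundedContinuousFunction.coe_sub,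
      BoundedContinuousFunction.coe_smul, Pi.add_apply, Pi.sub_apply, Pi.smul_apply,
      smul_eq_mul] at key
    have hφlb := hmle (0, 0)
    have hφub : φ (0, 0) ≤ ‖φ‖ := by
      have := φ.norm_coe_le_norm (0, 0)
      rw [Real.norm_eq_abs] at this
      exact (abs_le.mp this).2
    have hψub : ψ' (0, 0) ≤ ‖ψ'‖ := by
      have := ψ'.norm_coe_le_norm (0, 0)
      rw [Real.norm_eq_abs] at this
      exact (abs_le.mp this).2
    have hnn : 0 ≤ (n : ℝ) * γ' := mul_nonneg (Nat.cast_nonneg n) hγ'.le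
    have h5 : (n : ℝ) * γ' * m ≤ (n : ℝ) * γ' * φ (0, 0) :=
      mul_le_mul_of_nonneg_left hφlb hnn
    have h6 : c * φ (0, 0) ≤ c * ‖φ‖ := mul_le_mul_of_nonneg_left hφub hc0
    have h7 : (‖ψ'‖ + c * ‖φ‖) < (n : ℝ) * (γ' * m) := by
      rwa [div_lt_iff₀ hγm] at hn
    nlinarith
  have hγ0 : γ = 0 := by
    rcases lt_trichotomy γ 0 with hlt | heq | hgt
    · exfalso
      refine main (-ψ) (-γ) ?_ (by linarith)
      rw [map_neg, show (-γ : ℝ) • φ = -(γ • φ) from neg_smul γ φ, ← hψ]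
      abel
    · exact heq
    · exact absurd hgt (main ψ γ hψ)
  exact ⟨hγ0, by rw [hψ, hγ0, zero_smul]⟩
end

section
/- Let k : ℝ^N → ℝ be continuous, nonnegative, with k(z) > 0 for ‖z‖ < r₀ and k(z) = 0 for ‖z‖ ≥ r₀, and ∫ k = 1. Then for every ξ ∈ S^{N−1}, the function μ ↦ ∫_{ℝ^N} e^{−μ y·ξ} k(y) dy satisfies ∫ e^{−μ y·ξ} k(y) dy ≥ m₀ + m μ² for all μ > 0, where m₀ = k₀·vol(B(0,r₀/2)), m = inf_{ξ∈S^{N−1}} k₀ ∫_{‖y‖≤r₀/2} (y·ξ)²/2 dy > 0, and k₀ = inf_{‖y‖≤r₀/2} k(y) > 0. -/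
open MeasureTheory Metric

private lemma cosh_quadratic_le (x : ℝ) : 1 + x ^ 2 / 2 ≤ Real.cosh x := by
  have h2 := Real.cosh_two_mul (x / 2)
  have hx : 2 * (x / 2) = x := by ring
  rw [hx, Real.cosh_sq] at h2
  have h3 : |x / 2| ≤ Real.sinh |x / 2| := Real.self_le_sinh_iff.2 (abs_nonneg _)
  have h4 : (x / 2) ^ 2 ≤ Real.sinh (x / 2) ^ 2 := by
    have := pow_le_pow_left₀ (abs_nonneg (x / 2)) h3 2
    rwa [sq_abs, ← Real.abs_sinh, sq_abs] at this
  nlinarith [h2, h4]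

/-- lower bound `∫ e^{-μ y·ξ} k(y) dy ≥ m₀ + m μ²` for the kernel transform,
with `k₀ = inf_{‖y‖ ≤ r₀/2} k`, `m₀ = k₀ · vol(B(0, r₀/2))`,
`m = inf_{‖ξ‖=1} k₀ ∫_{‖y‖ ≤ r₀/2} (y·ξ)²/2 dy`, and `k₀ > 0`, `m > 0`. -/
theorem kernel_transform_lower_bound {N : ℕ} (hN : 0 < N)
    (k : EuclideanSpace ℝ (Fin N) → ℝ) (r₀ : ℝ) (hr₀ : 0 < r₀)
    (hkc : Continuous k) (hknn : ∀ z, 0 ≤ k z)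
    (hkpos : ∀ z, ‖z‖ < r₀ → 0 < k z) (hkzero : ∀ z, r₀ ≤ ‖z‖ → k z = 0)
    (hkint : ∫ z, k z = 1) :
    0 < sInf (k '' closedBall 0 (r₀ / 2)) ∧
    0 < sInf ((fun ξ : EuclideanSpace ℝ (Fin N) =>
        sInf (k '' closedBall 0 (r₀ / 2)) *
          ∫ y in closedBall (0 : EuclideanSpace ℝ (Fin N)) (r₀ / 2),
            (inner ℝ y ξ : ℝ) ^ 2 / 2) '' {ξ | ‖ξ‖ = 1}) ∧
    ∀ ξ : EuclideanSpace ℝ (Fin N), ‖ξ‖ = 1 → ∀ μ : ℝ, 0 < μ →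
      sInf (k '' closedBall 0 (r₀ / 2)) *
          (volume (closedBall (0 : EuclideanSpace ℝ (Fin N)) (r₀ / 2))).toReal +
        sInf ((fun ξ : EuclideanSpace ℝ (Fin N) =>
          sInf (k '' closedBall 0 (r₀ / 2)) *
            ∫ y in closedBall (0 : EuclideanSpace ℝ (Fin N)) (r₀ / 2),
              (inner ℝ y ξ : ℝ) ^ 2 / 2) '' {ξ | ‖ξ‖ = 1}) * μ ^ 2 ≤
      ∫ y, Real.exp (-μ * (inner ℝ y ξ : ℝ)) * k y := by
  classical
  set B := closedBall (0 : EuclideanSpace ℝ (Fin N)) (r₀ / 2) with hBdef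
  have hr2 : (0 : ℝ) < r₀ / 2 := by positivity
  have hBne : B.Nonempty := ⟨0, mem_closedBall_self hr2.le⟩
  have hBc : IsCompact B := isCompact_closedBall _ _
  have himc : IsCompact (k '' B) := hBc.image hkc
  have himne : (k '' B).Nonempty := hBne.image k
  set k₀ := sInf (k '' B) with hk₀def
  have hk₀mem : k₀ ∈ k '' B := himc.sInf_mem himne
  obtain ⟨y₀, hy₀, hy₀eq⟩ := hk₀mem
  have hk₀pos : 0 < k₀ := by
    rw [← hy₀eq]
    exact hkpos y₀ (lt_of_le_of_lt (mem_closedBall_zero_iff.1 hy₀) (by linarith))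
  have hk₀le : ∀ y ∈ B, k₀ ≤ k y := fun y hy => csInf_le himc.bddBelow ⟨y, hy, rfl⟩
  -- constancy of the quadratic integral over the sphere
  have hconst : ∀ ξ ξ' : EuclideanSpace ℝ (Fin N), ‖ξ‖ = 1 → ‖ξ'‖ = 1 →
      (∫ y in B, (inner ℝ y ξ : ℝ) ^ 2 / 2) = ∫ y in B, (inner ℝ y ξ' : ℝ) ^ 2 / 2 := by
    intro ξ ξ' hξ hξ'
    set f := Submodule.reflection (ℝ ∙ (ξ - ξ'))ᗮ with hfdef
    have hfξ : f ξ = ξ' := Submodule.reflection_sub (by rw [hξ, hξ'])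
    have hmp : MeasurePreserving f volume volume := f.measurePreserving
    have hemb : MeasurableEmbedding f := f.toHomeomorph.measurableEmbedding
    have hpre : f ⁻¹' B = B := by
      ext y
      simp only [Set.mem_preimage, hBdef, mem_closedBall_zero_iff, f.norm_map]
    have hinner : ∀ y, (inner ℝ (f y) ξ' : ℝ) = inner ℝ y ξ := by
      intro y; rw [← hfξ]; exact f.inner_map_map y ξ
    have key := hmp.setIntegral_preimage_emb hemb
      (fun z => (inner ℝ z ξ' : ℝ) ^ 2 / 2) B
    rw [hpre] at key
    simp_rw [hinner] at key
    exact key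
  set S := {ξ : EuclideanSpace ℝ (Fin N) | ‖ξ‖ = 1} with hSdef
  set ξ₀ : EuclideanSpace ℝ (Fin N) := EuclideanSpace.single ⟨0, hN⟩ 1 with hξ₀def
  have hξ₀ : ‖ξ₀‖ = 1 := by
    rw [hξ₀def, EuclideanSpace.norm_single]; norm_num
  set c := ∫ y in B, (inner ℝ y ξ₀ : ℝ) ^ 2 / 2 with hcdef
  have himg : (fun ξ : EuclideanSpace ℝ (Fin N) =>
      k₀ * ∫ y in B, (inner ℝ y ξ : ℝ) ^ 2 / 2) '' S = {k₀ * c} := by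
    ext z
    simp only [Set.mem_image, Set.mem_singleton_iff]
    constructor
    · rintro ⟨ξ, hξ, rfl⟩
      rw [hconst ξ ξ₀ hξ hξ₀]
    · rintro rfl; exact ⟨ξ₀, hξ₀, rfl⟩
  have hcontq : Continuous fun y : EuclideanSpace ℝ (Fin N) => (inner ℝ y ξ₀ : ℝ) ^ 2 / 2 :=
    ((continuous_id.inner continuous_const).pow 2).div_const 2
  have hcpos : 0 < c := by
    have hint : IntegrableOn (fun y => (inner ℝ y ξ₀ : ℝ) ^ 2 / 2) B :=
      hcontq.continuousOn.integrableOn_compact hBc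
    have hae : 0 ≤ᵐ[volume.restrict B] fun y => (inner ℝ y ξ₀ : ℝ) ^ 2 / 2 :=
      Filter.Eventually.of_forall fun y => by positivity
    rw [hcdef, setIntegral_pos_iff_support_of_nonneg_ae hae hint]
    set H : Submodule ℝ (EuclideanSpace ℝ (Fin N)) := (ℝ ∙ ξ₀)ᗮ with hHdef
    have hHne : H ≠ ⊤ := by
      intro h
      have : ξ₀ ∈ H := h ▸ Submodule.mem_top
      have h0 : (inner ℝ ξ₀ ξ₀ : ℝ) = 0 :=
        this ξ₀ (Submodule.mem_span_singleton_self ξ₀)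
      rw [real_inner_self_eq_norm_sq, hξ₀] at h0
      norm_num at h0
    have hH0 : volume (H : Set (EuclideanSpace ℝ (Fin N))) = 0 :=
      Measure.addHaar_submodule _ H hHne
    have hsub : B \ (H : Set (EuclideanSpace ℝ (Fin N))) ⊆
        Function.support (fun y => (inner ℝ y ξ₀ : ℝ) ^ 2 / 2) ∩ B := by
      rintro y ⟨hyB, hyH⟩
      refine ⟨?_, hyB⟩
      simp only [Function.mem_support]
      intro hy0
      apply hyH
      have hsq : (inner ℝ y ξ₀ : ℝ) ^ 2 = 0 := by linarith [hy0]
      have hz : (inner ℝ y ξ₀ : ℝ) = 0 := pow_eq_zero_iff (by norm_num : 2 ≠ 0) |>.1 hsq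
      refine (Submodule.mem_orthogonal _ y).2 fun u hu => ?_
      obtain ⟨a, rfl⟩ := Submodule.mem_span_singleton.1 hu
      rw [real_inner_smul_left, real_inner_comm, hz, mul_zero]
    have hBpos : 0 < volume B := measure_closedBall_pos _ _ hr2
    have hBdiff : volume (B \ (H : Set (EuclideanSpace ℝ (Fin N)))) = volume B :=
      measure_diff_null hH0
    calc (0 : ENNReal) < volume B := hBpos
      _ = volume (B \ (H : Set (EuclideanSpace ℝ (Fin N)))) := hBdiff.symm
      _ ≤ _ := measure_mono hsub
  have hmS : sInf ((fun ξ : EuclideanSpace ℝ (Fin N) =>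
      k₀ * ∫ y in B, (inner ℝ y ξ : ℝ) ^ 2 / 2) '' S) = k₀ * c := by
    rw [himg]; exact csInf_singleton _
  refine ⟨hk₀pos, by rw [hmS]; positivity, ?_⟩
  intro ξ hξ μ hμ
  rw [hmS]
  -- replace k₀ * c by the value at ξ
  have hcξ : c = ∫ y in B, (inner ℝ y ξ : ℝ) ^ 2 / 2 := hconst ξ₀ ξ hξ₀ hξ
  set φ : EuclideanSpace ℝ (Fin N) → ℝ := fun y => Real.exp (-μ * (inner ℝ y ξ : ℝ)) with hφdef
  have hφc : Continuous φ :=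
    Real.continuous_exp.comp (continuous_const.mul (continuous_id.inner continuous_const))
  have hFc : Continuous fun y => φ y * k y := hφc.mul hkc
  have hFsupp : HasCompactSupport fun y => φ y * k y := by
    apply HasCompactSupport.intro (isCompact_closedBall (0 : EuclideanSpace ℝ (Fin N)) r₀)
    intro x hx
    have : r₀ ≤ ‖x‖ := le_of_lt (by simpa [mem_closedBall_zero_iff] using hx)
    simp [hkzero x this]
  have hFint : Integrable fun y => φ y * k y := hFc.integrable_of_hasCompactSupport hFsupp
  -- integrability on B of various functions
  have hIconst : IntegrableOn (fun _ : EuclideanSpace ℝ (Fin N) => (1 : ℝ)) B :=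
    integrableOn_const hBc.measure_lt_top.ne
  have hIq : IntegrableOn (fun y => μ ^ 2 * ((inner ℝ y ξ : ℝ) ^ 2 / 2)) B :=
    (continuous_const.mul
      (((continuous_id.inner continuous_const).pow 2).div_const 2)).continuousOn.integrableOn_compact hBc
  have hIq' : IntegrableOn (fun y => (inner ℝ y ξ : ℝ) ^ 2 / 2) B :=
    (((continuous_id.inner continuous_const).pow 2).div_const
      2).continuousOn.integrableOn_compact hBc
  have hIcosh : IntegrableOn (fun y => Real.cosh (μ * (inner ℝ y ξ : ℝ))) B :=
    (Real.continuous_cosh.comp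
      (continuous_const.mul (continuous_id.inner continuous_const))).continuousOn.integrableOn_compact hBc
  have hIexp : IntegrableOn φ B := hφc.continuousOn.integrableOn_compact hBc
  have hIexp' : IntegrableOn (fun y => Real.exp (μ * (inner ℝ y ξ : ℝ))) B :=
    (Real.continuous_exp.comp
      (continuous_const.mul (continuous_id.inner continuous_const))).continuousOn.integrableOn_compact hBc
  -- symmetry : ∫ exp(μ⟨y,ξ⟩) = ∫ exp(-μ⟨y,ξ⟩) over B
  have hneg : (∫ y in B, Real.exp (μ * (inner ℝ y ξ : ℝ))) = ∫ y in B, φ y := by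
    have hmp : MeasurePreserving (fun y : EuclideanSpace ℝ (Fin N) => -y) volume volume :=
      Measure.measurePreserving_neg _
    have hemb : MeasurableEmbedding (fun y : EuclideanSpace ℝ (Fin N) => -y) :=
      (Homeomorph.neg (EuclideanSpace ℝ (Fin N))).measurableEmbedding
    have hpre : (fun y : EuclideanSpace ℝ (Fin N) => -y) ⁻¹' B = B := by
      ext y
      simp [hBdef, mem_closedBall_zero_iff]
    have key := hmp.setIntegral_preimage_emb hemb φ B
    rw [hpre] at key
    rw [← key]
    refine setIntegral_congr_fun measurableSet_closedBall fun y _ => ?_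
    simp only [hφdef, inner_neg_left]
    ring_nf
  have hcosh_eq : (∫ y in B, Real.cosh (μ * (inner ℝ y ξ : ℝ))) = ∫ y in B, φ y := by
    have : ∀ y : EuclideanSpace ℝ (Fin N), Real.cosh (μ * (inner ℝ y ξ : ℝ)) =
        (Real.exp (μ * (inner ℝ y ξ : ℝ)) + φ y) / 2 := by
      intro y
      rw [Real.cosh_eq, hφdef]
      ring_nf
    simp_rw [this]
    rw [integral_div, integral_add hIexp' hIexp, hneg]
    ring
  -- main chain
  have hchain : k₀ * (volume B).toReal + k₀ * (∫ y in B, (inner ℝ y ξ : ℝ) ^ 2 / 2) * μ ^ 2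
      ≤ ∫ y, φ y * k y := by
    calc k₀ * (volume B).toReal + k₀ * (∫ y in B, (inner ℝ y ξ : ℝ) ^ 2 / 2) * μ ^ 2
        = k₀ * ∫ y in B, (1 + μ ^ 2 * ((inner ℝ y ξ : ℝ) ^ 2 / 2)) := by
          have hsplit : (∫ y in B, (1 + μ ^ 2 * ((inner ℝ y ξ : ℝ) ^ 2 / 2)))
              = (volume B).toReal + μ ^ 2 * ∫ y in B, (inner ℝ y ξ : ℝ) ^ 2 / 2 := by
            rw [integral_add hIconst hIq, integral_const, integral_const_mul]
            simp [Measure.restrict_apply_univ, Measure.real]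
          rw [hsplit]
          ring
      _ ≤ k₀ * ∫ y in B, Real.cosh (μ * (inner ℝ y ξ : ℝ)) := by
          apply mul_le_mul_of_nonneg_left _ hk₀pos.le
          apply setIntegral_mono_on (hIconst.add hIq) hIcosh measurableSet_closedBall
          intro y _
          have := cosh_quadratic_le (μ * (inner ℝ y ξ : ℝ))
          calc 1 + μ ^ 2 * ((inner ℝ y ξ : ℝ) ^ 2 / 2)
              = 1 + (μ * (inner ℝ y ξ : ℝ)) ^ 2 / 2 := by ring
            _ ≤ Real.cosh (μ * (inner ℝ y ξ : ℝ)) := this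
      _ = k₀ * ∫ y in B, φ y := by rw [hcosh_eq]
      _ = ∫ y in B, k₀ * φ y := (integral_const_mul _ _).symm
      _ ≤ ∫ y in B, φ y * k y := by
          apply setIntegral_mono_on (hIexp.const_mul k₀) hFint.integrableOn
            measurableSet_closedBall
          intro y hy
          rw [mul_comm (φ y) (k y)]
          exact mul_le_mul_of_nonneg_right (hk₀le y hy) (Real.exp_pos _).le
      _ ≤ ∫ y, φ y * k y := setIntegral_le_integral hFint
          (Filter.Eventually.of_forall fun y => mul_nonneg (Real.exp_pos _).le (hknn y))
  rw [hcξ]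
  exact hchain
end

section
/- With k as above, for every ξ ∈ S^{N−1} and constant a_min ∈ ℝ, the function μ ↦ (∫_{ℝ^N} e^{−μ y·ξ} k(y) dy − 1 + a_min)/μ tends to +∞ as μ → ∞. -/
open MeasureTheory Filter

/-- `(∫ e^{-μ y·ξ} k(y) dy - 1 + a_min)/μ → +∞` as `μ → ∞`. -/
theorem kernel_quotient_tendsto_atTop {N : ℕ} (hN : 0 < N)
    (k : EuclideanSpace ℝ (Fin N) → ℝ) (r₀ : ℝ) (hr₀ : 0 < r₀)
    (hkc : Continuous k) (hknn : ∀ z, 0 ≤ k z)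
    (hkpos : ∀ z, ‖z‖ < r₀ → 0 < k z) (hkzero : ∀ z, r₀ ≤ ‖z‖ → k z = 0)
    (hkint : ∫ z, k z = 1)
    (ξ : EuclideanSpace ℝ (Fin N)) (hξ : ‖ξ‖ = 1) (amin : ℝ) :
    Tendsto (fun μ : ℝ =>
        ((∫ y, Real.exp (-μ * (inner ℝ y ξ : ℝ)) * k y) - 1 + amin) / μ) atTop atTop := by
  have hcpos : (0:ℝ) < r₀ / 4 := by linarith
  set c : ℝ := r₀ / 4 with hc
  set x₀ : EuclideanSpace ℝ (Fin N) := (-(r₀/2)) • ξ with hx₀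
  set B := Metric.closedBall x₀ c with hB
  have hx₀n : ‖x₀‖ = r₀ / 2 := by
    rw [hx₀, norm_smul, hξ]
    rw [Real.norm_eq_abs, abs_neg, abs_of_nonneg (by linarith : (0:ℝ) ≤ r₀/2), mul_one]
  have hBne : B.Nonempty := ⟨x₀, Metric.mem_closedBall_self hcpos.le⟩
  have hBc : IsCompact B := isCompact_closedBall _ _
  obtain ⟨y₀, hy₀B, hy₀min⟩ := hBc.exists_isMinOn hBne hkc.continuousOn
  rw [isMinOn_iff] at hy₀min
  have hnormB : ∀ y ∈ B, ‖y‖ < r₀ := by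
    intro y hy
    have h1 : ‖y - x₀‖ ≤ c := by
      simpa [hB, Metric.mem_closedBall, dist_eq_norm] using hy
    calc ‖y‖ = ‖(y - x₀) + x₀‖ := by rw [sub_add_cancel]
      _ ≤ ‖y - x₀‖ + ‖x₀‖ := norm_add_le _ _
      _ ≤ c + r₀/2 := by rw [hx₀n]; linarith
      _ < r₀ := by rw [hc]; linarith
  have hm : 0 < k y₀ := hkpos y₀ (hnormB y₀ hy₀B)
  set m := k y₀ with hmdef
  have hinner : ∀ y ∈ B, (inner ℝ y ξ : ℝ) ≤ -c := by
    intro y hy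
    have h1 : ‖y - x₀‖ ≤ c := by
      simpa [hB, Metric.mem_closedBall, dist_eq_norm] using hy
    have h2 : (inner ℝ (y - x₀) ξ : ℝ) ≤ c := by
      calc (inner ℝ (y - x₀) ξ : ℝ) ≤ ‖y - x₀‖ * ‖ξ‖ := real_inner_le_norm _ _
        _ = ‖y - x₀‖ := by rw [hξ, mul_one]
        _ ≤ c := h1
    have h3 : (inner ℝ x₀ ξ : ℝ) = -(r₀/2) := by
      rw [hx₀, real_inner_smul_left, real_inner_self_eq_norm_sq, hξ]
      ring
    have h4 : (inner ℝ y ξ : ℝ) = (inner ℝ (y - x₀) ξ : ℝ) + (inner ℝ x₀ ξ : ℝ) := by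
      rw [inner_sub_left]; ring
    rw [h4, h3]
    rw [hc]; linarith
  -- compact support of k
  have hks : HasCompactSupport k := by
    apply HasCompactSupport.intro (isCompact_closedBall (0 : EuclideanSpace ℝ (Fin N)) r₀)
    intro x hx
    apply hkzero
    have : ¬ dist x 0 ≤ r₀ := by simpa [Metric.mem_closedBall] using hx
    rw [dist_zero_right] at this
    linarith [not_le.mp this]
  have hint : ∀ μ : ℝ, Integrable (fun y => Real.exp (-μ * (inner ℝ y ξ : ℝ)) * k y) := by
    intro μ
    have hcont : Continuous (fun y : EuclideanSpace ℝ (Fin N) =>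
        Real.exp (-μ * (inner ℝ y ξ : ℝ)) * k y) := by
      apply Continuous.mul _ hkc
      exact Real.continuous_exp.comp (continuous_const.mul ((continuous_id.inner continuous_const)))
    have hcs : HasCompactSupport (fun y : EuclideanSpace ℝ (Fin N) =>
        Real.exp (-μ * (inner ℝ y ξ : ℝ)) * k y) := HasCompactSupport.mul_left hks
    exact hcont.integrable_of_hasCompactSupport hcs
  set V : ℝ := m * (volume B).toReal with hV
  have hvolpos : 0 < (volume B).toReal := by
    apply ENNReal.toReal_pos
    · exact (Metric.measure_closedBall_pos volume x₀ hcpos).ne'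
    · exact (hBc.measure_lt_top).ne
  have hVpos : 0 < V := mul_pos hm hvolpos
  -- lower bound on the integral for μ ≥ 0
  have hlow : ∀ μ : ℝ, 0 ≤ μ →
      V * Real.exp (c * μ) ≤ ∫ y, Real.exp (-μ * (inner ℝ y ξ : ℝ)) * k y := by
    intro μ hμ
    have hbd : ∀ y ∈ B, m * Real.exp (c * μ) ≤ Real.exp (-μ * (inner ℝ y ξ : ℝ)) * k y := by
      intro y hy
      have h1 : Real.exp (c * μ) ≤ Real.exp (-μ * (inner ℝ y ξ : ℝ)) := by
        apply Real.exp_le_exp.mpr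
        have := hinner y hy
        nlinarith
      have h2 : m ≤ k y := hy₀min y hy
      calc m * Real.exp (c * μ) ≤ k y * Real.exp (-μ * (inner ℝ y ξ : ℝ)) :=
            mul_le_mul h2 h1 (Real.exp_pos _).le (hknn y)
        _ = Real.exp (-μ * (inner ℝ y ξ : ℝ)) * k y := mul_comm _ _
    have hstep1 : (m * Real.exp (c * μ)) * (volume B).toReal ≤
        ∫ y in B, Real.exp (-μ * (inner ℝ y ξ : ℝ)) * k y := by
      have h := MeasureTheory.setIntegral_ge_of_const_le measurableSet_closedBall
        (hBc.measure_lt_top).ne hbd ((hint μ).integrableOn)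
      rw [smul_eq_mul, measureReal_def] at h; linarith
    have hstep2 : (∫ y in B, Real.exp (-μ * (inner ℝ y ξ : ℝ)) * k y) ≤
        ∫ y, Real.exp (-μ * (inner ℝ y ξ : ℝ)) * k y := by
      apply MeasureTheory.setIntegral_le_integral (hint μ)
      filter_upwards with y
      exact mul_nonneg (Real.exp_pos _).le (hknn y)
    calc V * Real.exp (c * μ) = (m * Real.exp (c * μ)) * (volume B).toReal := by
          rw [hV]; ring
      _ ≤ _ := le_trans hstep1 hstep2
  -- the comparison function tends to atTop
  have htarget : Tendsto (fun μ : ℝ => (V * Real.exp (c * μ) - 1 + amin) / μ) atTop atTop := by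
    have h1 : Tendsto (fun μ : ℝ => Real.exp (c * μ) / (c * μ)) atTop atTop := by
      have := Real.tendsto_exp_div_pow_atTop 1
      simp only [pow_one] at this
      exact this.comp (Tendsto.const_mul_atTop hcpos tendsto_id)
    have h2 : Tendsto (fun μ : ℝ => (V * c) * (Real.exp (c * μ) / (c * μ))) atTop atTop :=
      Tendsto.const_mul_atTop (mul_pos hVpos hcpos) h1
    have h3 : Tendsto (fun μ : ℝ => (amin - 1) / μ) atTop (nhds 0) :=
      Tendsto.div_atTop tendsto_const_nhds tendsto_id
    have hev : ∀ᶠ μ : ℝ in atTop, (-1:ℝ) ≤ (amin - 1) / μ :=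
      h3.eventually (eventually_ge_nhds (by norm_num : (-1:ℝ) < 0))
    have h4 := tendsto_atTop_add_right_of_le' atTop (-1:ℝ) h2 hev
    apply h4.congr'
    filter_upwards [eventually_gt_atTop (0:ℝ)] with μ hμ
    have hcμ : c * μ ≠ 0 := by positivity
    field_simp
    ring
  -- final comparison
  apply tendsto_atTop_mono' atTop _ htarget
  filter_upwards [eventually_gt_atTop (0:ℝ)] with μ hμ
  rw [div_le_div_iff_of_pos_right hμ]
  have := hlow μ hμ.le
  linarith
end

section
/- Let m(x; y, dy) be the kernel measures of the time-T solution operator of a linear nonlocal dispersal equation with space-periodic coefficients, acting boundedly on each weighted space X(ρ) of continuous functions u with sup_x e^{−ρ‖x‖}|u(x)| < ∞. Then for every μ₀ > 0, ∫_{‖y−x‖ ≥ B} e^{μ‖y−x‖} m(x; y, dy) → 0 as B → ∞, uniformly in x ∈ ℝ^N and uniformly for |μ| ≤ μ₀. -/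
open MeasureTheory

/-- For the kernel measures of the time-T solution operator (translation
covariant along the periods, and bounded on each exponentially weighted space),
`∫_{‖y-x‖ ≥ B} e^{μ‖y-x‖} m(x; y, dy) → 0` as `B → ∞`, uniformly in `x` and in `|μ| ≤ μ₀`. -/
theorem kernel_tail_integral_tendsto_zero {N : ℕ} (p : Fin N → ℝ) (hp : ∀ i, 0 < p i)
    (m : EuclideanSpace ℝ (Fin N) → Measure (EuclideanSpace ℝ (Fin N)))
    (hfin : ∀ x, IsFiniteMeasure (m x))
    (hcov : ∀ (i : Fin N) (x : EuclideanSpace ℝ (Fin N)),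
      m (x - p i • EuclideanSpace.single i (1 : ℝ)) =
        Measure.map (fun y => y - p i • EuclideanSpace.single i (1 : ℝ)) (m x))
    (hint : ∀ (x : EuclideanSpace ℝ (Fin N)) (ρ : ℝ), 0 ≤ ρ →
      Integrable (fun y => Real.exp (ρ * ‖y‖)) (m x))
    (hbdd : ∀ ρ : ℝ, 0 ≤ ρ → ∃ C : ℝ, ∀ x,
      (∫ y, Real.exp (ρ * ‖y‖) ∂(m x)) ≤ C * Real.exp (ρ * ‖x‖))
    (μ₀ : ℝ) (hμ₀ : 0 < μ₀) :
    ∀ ε : ℝ, 0 < ε → ∃ B₀ : ℝ, ∀ B : ℝ, B₀ ≤ B →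
      ∀ (x : EuclideanSpace ℝ (Fin N)) (μ : ℝ), |μ| ≤ μ₀ →
        (∫ y in {y | B ≤ ‖y - x‖}, Real.exp (μ * ‖y - x‖) ∂(m x)) < ε := by
  classical
  intro ε hε
  set ρ : ℝ := μ₀ + 1 with hρdef
  have hρ0 : (0:ℝ) ≤ ρ := by positivity
  obtain ⟨C, hC⟩ := hbdd ρ hρ0
  set R : ℝ := Real.sqrt (∑ i, (p i) ^ 2) with hRdef
  have hR0 : 0 ≤ R := Real.sqrt_nonneg _
  set D : ℝ := max C 0 with hDdef
  set K : ℝ := max 1 (D * Real.exp (ρ * R) * Real.exp (ρ * R)) with hKdef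
  have hK1 : (1:ℝ) ≤ K := le_max_left _ _
  have hK0 : (0:ℝ) < K := lt_of_lt_of_le one_pos hK1
  refine ⟨Real.log (K / ε) + 1, ?_⟩
  intro B hB x μ hμ
  -- notation
  set v : Fin N → EuclideanSpace ℝ (Fin N) :=
    fun i => p i • EuclideanSpace.single i (1 : ℝ) with hvdef
  set F : EuclideanSpace ℝ (Fin N) → ℝ :=
    fun z => ∫ y in {y | B ≤ ‖y - z‖}, Real.exp (μ * ‖y - z‖) ∂(m z) with hFdef
  -- one-step invariance
  have step : ∀ (i : Fin N) (z : EuclideanSpace ℝ (Fin N)), F (z - v i) = F z := by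
    intro i z
    have hemb : MeasurableEmbedding (fun y : EuclideanSpace ℝ (Fin N) => y - v i) := by
      have h : (fun y : EuclideanSpace ℝ (Fin N) => y - v i) = fun y => y + (-v i) := by
        funext y; exact sub_eq_add_neg y (v i)
      rw [h]
      exact (MeasurableEquiv.addRight (-v i)).measurableEmbedding
    have hm : m (z - v i) = Measure.map (fun y => y - v i) (m z) := hcov i z
    simp only [hFdef]
    rw [hm, hemb.setIntegral_map]
    have hpre : (fun y : EuclideanSpace ℝ (Fin N) => y - v i) ⁻¹' {y | B ≤ ‖y - (z - v i)‖}
        = {y | B ≤ ‖y - z‖} := by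
      ext w
      simp [Set.mem_preimage, sub_sub_sub_cancel_right]
    rw [hpre]
    congr 1
    funext w
    rw [sub_sub_sub_cancel_right]
  have step' : ∀ (i : Fin N) (z : EuclideanSpace ℝ (Fin N)), F (z + v i) = F z := by
    intro i z
    have := step i (z + v i)
    simpa using this.symm
  -- integer multiples
  have stepZ : ∀ (i : Fin N) (k : ℤ) (z : EuclideanSpace ℝ (Fin N)),
      F (z - (k : ℝ) • v i) = F z := by
    intro i k
    induction k using Int.induction_on with
    | zero => intro z; simp
    | succ n ih =>
      intro z
      have hc : ((n + 1 : ℤ) : ℝ) = ((n : ℤ) : ℝ) + 1 := by push_cast; ring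
      have h1 : z - ((n + 1 : ℤ) : ℝ) • v i = (z - v i) - ((n : ℤ) : ℝ) • v i := by
        rw [hc, add_smul, one_smul]; abel
      rw [h1, ih, step]
    | pred n ih =>
      intro z
      have hc : ((-n - 1 : ℤ) : ℝ) = ((-n : ℤ) : ℝ) - 1 := by push_cast; ring
      have h1 : z - ((-n - 1 : ℤ) : ℝ) • v i = (z + v i) - ((-n : ℤ) : ℝ) • v i := by
        rw [hc, sub_smul, one_smul]; abel
      rw [h1, ih, step']
  -- sums of integer multiples over coordinates
  have stepSum : ∀ (s : Finset (Fin N)) (k : Fin N → ℤ) (z : EuclideanSpace ℝ (Fin N)),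
      F (z - ∑ i ∈ s, (k i : ℝ) • v i) = F z := by
    intro s
    induction s using Finset.induction_on with
    | empty => intro k z; simp
    | insert _ _ hni ih =>
      intro k z
      rename_i a s
      have h1 : z - ∑ i ∈ insert a s, (k i : ℝ) • v i
          = (z - (k a : ℝ) • v a) - ∑ i ∈ s, (k i : ℝ) • v i := by
        rw [Finset.sum_insert hni]; abel
      rw [h1, ih, stepZ]
  -- reduce x to the fundamental cell
  set k : Fin N → ℤ := fun i => ⌊x i / p i⌋ with hkdef
  set x₀ : EuclideanSpace ℝ (Fin N) := x - ∑ i, (k i : ℝ) • v i with hx₀def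
  have hFx : F x = F x₀ := (stepSum Finset.univ k x).symm
  -- coordinates of x₀
  have hsum_apply : ∀ (j : Fin N), (∑ i, (k i : ℝ) • v i) j = (k j : ℝ) * p j := by
    intro j
    have hgen : ∀ (s : Finset (Fin N)),
        (∑ i ∈ s, (k i : ℝ) • v i) j = ∑ i ∈ s, (k i : ℝ) * (p i) *
          (EuclideanSpace.single i (1:ℝ) j) := by
      intro s
      induction s using Finset.induction_on with
      | empty => simp
      | insert _ _ hni ih =>
        rename_i a s
        rw [Finset.sum_insert hni, Finset.sum_insert hni, PiLp.add_apply, ih,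
          PiLp.smul_apply, hvdef]
        simp [PiLp.smul_apply, mul_assoc]
    rw [hgen Finset.univ]
    rw [Finset.sum_eq_single j]
    · simp [EuclideanSpace.single_apply]
    · intro b _ hbj
      simp [EuclideanSpace.single_apply, hbj]
    · intro h; exact absurd (Finset.mem_univ j) h
  have hx₀coord : ∀ j, x₀ j = p j * Int.fract (x j / p j) := by
    intro j
    rw [hx₀def, PiLp.sub_apply, hsum_apply]
    rw [Int.fract]
    have hpj := (hp j).ne'
    field_simp
    ring
  have hx₀bound : ∀ j, |x₀ j| ≤ p j := by
    intro j
    have h0 : 0 ≤ p j * Int.fract (x j / p j) :=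
      mul_nonneg (hp j).le (Int.fract_nonneg _)
    rw [hx₀coord j, abs_of_nonneg h0]
    calc p j * Int.fract (x j / p j) ≤ p j * 1 := by
            exact mul_le_mul_of_nonneg_left (le_of_lt (Int.fract_lt_one _)) (hp j).le
        _ = p j := mul_one _
  have hx₀norm : ‖x₀‖ ≤ R := by
    rw [EuclideanSpace.norm_eq, hRdef]
    apply Real.sqrt_le_sqrt
    apply Finset.sum_le_sum
    intro j _
    have := hx₀bound j
    calc ‖x₀ j‖ ^ 2 = |x₀ j| ^ 2 := by rw [Real.norm_eq_abs]
      _ ≤ (p j) ^ 2 := by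
          exact pow_le_pow_left₀ (abs_nonneg _) this 2
  -- the estimate at x₀
  have hμ0' : 0 ≤ μ₀ := hμ₀.le
  have hSmeas : MeasurableSet {y : EuclideanSpace ℝ (Fin N) | B ≤ ‖y - x₀‖} := by
    apply measurableSet_le measurable_const
    exact (continuous_norm.comp (continuous_id.sub continuous_const)).measurable
  have hfcont : Continuous fun y : EuclideanSpace ℝ (Fin N) => Real.exp (μ * ‖y - x₀‖) :=
    Real.continuous_exp.comp (continuous_const.mul
      (continuous_norm.comp (continuous_id.sub continuous_const)))
  have hfint : Integrable (fun y => Real.exp (μ * ‖y - x₀‖)) (m x₀) := by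
    apply Integrable.mono' (((hint x₀ μ₀ hμ0').const_mul (Real.exp (μ₀ * ‖x₀‖))))
      hfcont.aestronglyMeasurable
    filter_upwards with y
    rw [Real.norm_eq_abs, abs_of_pos (Real.exp_pos _), ← Real.exp_add]
    apply Real.exp_le_exp.2
    have h1 : μ * ‖y - x₀‖ ≤ μ₀ * ‖y - x₀‖ :=
      mul_le_mul_of_nonneg_right (le_trans (le_abs_self μ) hμ) (norm_nonneg _)
    have h2 : ‖y - x₀‖ ≤ ‖y‖ + ‖x₀‖ := norm_sub_le _ _
    nlinarith [norm_nonneg (y - x₀)]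
  have hgint : Integrable (fun y => Real.exp (-B) * Real.exp (ρ * ‖x₀‖) *
      Real.exp (ρ * ‖y‖)) (m x₀) := (hint x₀ ρ hρ0).const_mul _
  have hpt : ∀ y ∈ {y : EuclideanSpace ℝ (Fin N) | B ≤ ‖y - x₀‖},
      Real.exp (μ * ‖y - x₀‖) ≤
        Real.exp (-B) * Real.exp (ρ * ‖x₀‖) * Real.exp (ρ * ‖y‖) := by
    intro y hy
    rw [← Real.exp_add, ← Real.exp_add]
    apply Real.exp_le_exp.2
    have hyB : B ≤ ‖y - x₀‖ := hy
    have h1 : μ * ‖y - x₀‖ ≤ μ₀ * ‖y - x₀‖ :=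
      mul_le_mul_of_nonneg_right (le_trans (le_abs_self μ) hμ) (norm_nonneg _)
    have h2 : ‖y - x₀‖ ≤ ‖y‖ + ‖x₀‖ := norm_sub_le _ _
    have h3 : ρ * ‖y - x₀‖ ≤ ρ * (‖y‖ + ‖x₀‖) := mul_le_mul_of_nonneg_left h2 hρ0
    have : μ₀ * ‖y - x₀‖ = ρ * ‖y - x₀‖ - ‖y - x₀‖ := by rw [hρdef]; ring
    linarith
  have hIineq : F x₀ ≤ Real.exp (-B) * K := by
    have h1 : F x₀ ≤ ∫ y in {y | B ≤ ‖y - x₀‖},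
        Real.exp (-B) * Real.exp (ρ * ‖x₀‖) * Real.exp (ρ * ‖y‖) ∂(m x₀) := by
      apply setIntegral_mono_on hfint.integrableOn hgint.integrableOn hSmeas hpt
    have h2 : (∫ y in {y | B ≤ ‖y - x₀‖},
        Real.exp (-B) * Real.exp (ρ * ‖x₀‖) * Real.exp (ρ * ‖y‖) ∂(m x₀))
        ≤ ∫ y, Real.exp (-B) * Real.exp (ρ * ‖x₀‖) * Real.exp (ρ * ‖y‖) ∂(m x₀) := by
      apply setIntegral_le_integral hgint
      filter_upwards with y
      positivity
    have h3 : (∫ y, Real.exp (-B) * Real.exp (ρ * ‖x₀‖) * Real.exp (ρ * ‖y‖) ∂(m x₀))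
        = Real.exp (-B) * Real.exp (ρ * ‖x₀‖) * ∫ y, Real.exp (ρ * ‖y‖) ∂(m x₀) :=
      integral_const_mul _ _
    have h4 : (∫ y, Real.exp (ρ * ‖y‖) ∂(m x₀)) ≤ D * Real.exp (ρ * R) := by
      rcases le_or_gt C 0 with hC0 | hC0
      · calc (∫ y, Real.exp (ρ * ‖y‖) ∂(m x₀)) ≤ C * Real.exp (ρ * ‖x₀‖) := hC x₀
          _ ≤ 0 := mul_nonpos_of_nonpos_of_nonneg hC0 (Real.exp_pos _).le
          _ ≤ D * Real.exp (ρ * R) := by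
              apply mul_nonneg (le_max_right _ _) (Real.exp_pos _).le
      · calc (∫ y, Real.exp (ρ * ‖y‖) ∂(m x₀)) ≤ C * Real.exp (ρ * ‖x₀‖) := hC x₀
          _ ≤ D * Real.exp (ρ * R) := by
              apply mul_le_mul (le_max_left _ _)
                (Real.exp_le_exp.2 (mul_le_mul_of_nonneg_left hx₀norm hρ0))
                (Real.exp_pos _).le (le_trans hC0.le (le_max_left _ _))
    calc F x₀ ≤ Real.exp (-B) * Real.exp (ρ * ‖x₀‖) * ∫ y, Real.exp (ρ * ‖y‖) ∂(m x₀) := by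
          rw [← h3]; exact le_trans h1 h2
      _ ≤ Real.exp (-B) * Real.exp (ρ * R) * (D * Real.exp (ρ * R)) := by
          apply mul_le_mul
          · apply mul_le_mul_of_nonneg_left _ (Real.exp_pos _).le
            exact Real.exp_le_exp.2 (mul_le_mul_of_nonneg_left hx₀norm hρ0)
          · exact h4
          · exact integral_nonneg fun y => (Real.exp_pos _).le
          · positivity
      _ = Real.exp (-B) * (D * Real.exp (ρ * R) * Real.exp (ρ * R)) := by ring
      _ ≤ Real.exp (-B) * K := by
          apply mul_le_mul_of_nonneg_left (le_max_right _ _) (Real.exp_pos _).le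
  -- conclude
  have hfinal : Real.exp (-B) * K < ε := by
    have hlog : Real.log (K / ε) + 1 ≤ B := hB
    have hKε : 0 < K / ε := div_pos hK0 hε
    have h1 : Real.exp (-B) ≤ Real.exp (-(Real.log (K / ε) + 1)) :=
      Real.exp_le_exp.2 (by linarith)
    have h2 : Real.exp (-(Real.log (K / ε) + 1)) = (ε / K) * Real.exp (-1) := by
      rw [neg_add, Real.exp_add, ← Real.log_inv, Real.exp_log (by positivity)]
      rw [inv_div]
    have h3 : Real.exp (-B) * K ≤ (ε / K) * Real.exp (-1) * K := by
      apply mul_le_mul_of_nonneg_right (h1.trans_eq h2) hK0.le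
    have h4 : (ε / K) * Real.exp (-1) * K = ε * Real.exp (-1) := by
      field_simp
    have h5 : ε * Real.exp (-1) < ε := by
      have : Real.exp (-1) < 1 := by
        rw [Real.exp_lt_one_iff]; norm_num
      nlinarith
    calc Real.exp (-B) * K ≤ ε * Real.exp (-1) := by rw [← h4]; exact h3
      _ < ε := h5
  calc (∫ y in {y | B ≤ ‖y - x‖}, Real.exp (μ * ‖y - x‖) ∂(m x)) = F x := rfl
    _ = F x₀ := hFx
    _ ≤ Real.exp (-B) * K := hIineq
    _ < ε := hfinal
end

section
/- (Comparison principle for a nonlocal linear equation.) Let u₁, u₂ be continuous functions on [0,T)×ℝ^N, differentiable in t, such that u₁ is a sub-solution and u₂ a super-solution of ∂u/∂t = ∫ e^{−μ(y−x)·ξ}k(y−x)u(t,y)dy − u(t,x) + a(t,x)u(t,x), with u₁(0,·) ≤ u₂(0,·) and u₂ − u₁ ≥ −β₀ on [0,T)×ℝ^N for some β₀ > 0. Then u₁(t,·) ≤ u₂(t,·) for all t ∈ [0,T). -/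
open MeasureTheory

/-- Comparison principle for the linear nonlocal equation
`∂u/∂t = ∫ e^{-μ(y-x)·ξ} k(y-x) u(t,y) dy - u + a(t,x) u`: if `u₁` is a sub-solution and
`u₂` a super-solution on `[0,T)` with `u₁(0,·) ≤ u₂(0,·)` and `u₂ - u₁ ≥ -β₀`,
then `u₁(t,·) ≤ u₂(t,·)` for all `t ∈ [0,T)`. -/
theorem comparison_principle_linear {N : ℕ}
    (ξ : EuclideanSpace ℝ (Fin N)) (hξ : ‖ξ‖ = 1) (μ : ℝ)
    (k : EuclideanSpace ℝ (Fin N) → ℝ) (r₀ : ℝ) (hr₀ : 0 < r₀)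
    (hkc : Continuous k) (hknn : ∀ z, 0 ≤ k z)
    (hkpos : ∀ z, ‖z‖ < r₀ → 0 < k z) (hkzero : ∀ z, r₀ ≤ ‖z‖ → k z = 0)
    (hkint : ∫ z, k z = 1)
    (T : ℝ) (hT : 0 < T) (p : Fin N → ℝ) (hp : ∀ i, 0 < p i)
    (a : ℝ → EuclideanSpace ℝ (Fin N) → ℝ)
    (hac : Continuous fun q : ℝ × EuclideanSpace ℝ (Fin N) => a q.1 q.2)
    (hab : ∃ C : ℝ, ∀ t x, |a t x| ≤ C)
    (haT : ∀ t x, a (t + T) x = a t x)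
    (hap : ∀ t x i, a t (x + p i • EuclideanSpace.single i (1 : ℝ)) = a t x)
    (u₁ u₂ u₁' u₂' : ℝ → EuclideanSpace ℝ (Fin N) → ℝ)
    (hc₁ : ContinuousOn (fun q : ℝ × EuclideanSpace ℝ (Fin N) => u₁ q.1 q.2)
      (Set.Ico 0 T ×ˢ Set.univ))
    (hc₂ : ContinuousOn (fun q : ℝ × EuclideanSpace ℝ (Fin N) => u₂ q.1 q.2)
      (Set.Ico 0 T ×ˢ Set.univ))
    (hc₁' : ContinuousOn (fun q : ℝ × EuclideanSpace ℝ (Fin N) => u₁' q.1 q.2)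
      (Set.Ico 0 T ×ˢ Set.univ))
    (hc₂' : ContinuousOn (fun q : ℝ × EuclideanSpace ℝ (Fin N) => u₂' q.1 q.2)
      (Set.Ico 0 T ×ˢ Set.univ))
    (hd₁ : ∀ x, ∀ t ∈ Set.Ico (0 : ℝ) T,
      HasDerivWithinAt (fun s => u₁ s x) (u₁' t x) (Set.Ico 0 T) t)
    (hd₂ : ∀ x, ∀ t ∈ Set.Ico (0 : ℝ) T,
      HasDerivWithinAt (fun s => u₂ s x) (u₂' t x) (Set.Ico 0 T) t)
    (hsub : ∀ t ∈ Set.Ico (0 : ℝ) T, ∀ x, u₁' t x ≤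
      (∫ y, Real.exp (-μ * (inner ℝ (y - x) ξ : ℝ)) * k (y - x) * u₁ t y) -
        u₁ t x + a t x * u₁ t x)
    (hsup : ∀ t ∈ Set.Ico (0 : ℝ) T, ∀ x,
      (∫ y, Real.exp (-μ * (inner ℝ (y - x) ξ : ℝ)) * k (y - x) * u₂ t y) -
        u₂ t x + a t x * u₂ t x ≤ u₂' t x)
    (hinit : ∀ x, u₁ 0 x ≤ u₂ 0 x)
    (β₀ : ℝ) (hβ₀ : 0 < β₀)
    (hlb : ∀ t ∈ Set.Ico (0 : ℝ) T, ∀ x, -β₀ ≤ u₂ t x - u₁ t x) :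
    ∀ t ∈ Set.Ico (0 : ℝ) T, ∀ x, u₁ t x ≤ u₂ t x := by
  classical
  obtain ⟨C, hC⟩ := hab
  have hC0 : 0 ≤ C := le_trans (abs_nonneg _) (hC 0 0)
  obtain ⟨M, hMdef⟩ : ∃ M : ℝ, M = Real.exp (|μ| * r₀) := ⟨_, rfl⟩
  have hMpos : (0 : ℝ) < M := hMdef ▸ Real.exp_pos _
  obtain ⟨K, hKdef⟩ : ∃ K : ℝ, K = M + (C + 1) := ⟨_, rfl⟩
  have hKpos : (0 : ℝ) < K := by rw [hKdef]; positivity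
  -- the kernel of the nonlocal operator
  obtain ⟨F, hFdef⟩ : ∃ F : EuclideanSpace ℝ (Fin N) → ℝ,
      F = fun z => Real.exp (-μ * (inner ℝ z ξ : ℝ)) * k z := ⟨_, rfl⟩
  have hFc : Continuous F := by
    rw [hFdef]
    exact (Real.continuous_exp.comp
      ((continuous_const.mul ((continuous_id.inner continuous_const))))).mul hkc
  have hFnn : ∀ z, 0 ≤ F z := fun z => by
    rw [hFdef]; exact mul_nonneg (Real.exp_pos _).le (hknn z)
  have hFle : ∀ z, F z ≤ M * k z := by
    intro z
    rw [hFdef]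
    by_cases h : r₀ ≤ ‖z‖
    · simp [hkzero z h]
    · push_neg at h
      refine mul_le_mul_of_nonneg_right ?_ (hknn z)
      rw [hMdef, Real.exp_le_exp]
      have h1 : |(inner ℝ z ξ : ℝ)| ≤ ‖z‖ * ‖ξ‖ := abs_real_inner_le_norm z ξ
      rw [hξ, mul_one] at h1
      calc -μ * (inner ℝ z ξ : ℝ) ≤ |(-μ) * (inner ℝ z ξ : ℝ)| := le_abs_self _
        _ = |μ| * |(inner ℝ z ξ : ℝ)| := by rw [abs_mul, abs_neg]
        _ ≤ |μ| * r₀ := by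
            apply mul_le_mul_of_nonneg_left (le_trans h1 h.le) (abs_nonneg _)
  have hFzero : ∀ z, r₀ ≤ ‖z‖ → F z = 0 := by
    intro z hz; rw [hFdef]; simp [hkzero z hz]
  have hFsupp : HasCompactSupport F := by
    apply HasCompactSupport.intro (isCompact_closedBall (0 : EuclideanSpace ℝ (Fin N)) r₀)
    intro z hz
    apply hFzero
    simp only [Metric.mem_closedBall, dist_zero_right, not_le] at hz
    exact hz.le
  have hksupp : HasCompactSupport k := by
    apply HasCompactSupport.intro (isCompact_closedBall (0 : EuclideanSpace ℝ (Fin N)) r₀)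
    intro z hz
    apply hkzero
    simp only [Metric.mem_closedBall, dist_zero_right, not_le] at hz
    exact hz.le
  have hFint : Integrable F := hFc.integrable_of_hasCompactSupport hFsupp
  have hkint' : Integrable k := hkc.integrable_of_hasCompactSupport hksupp
  have hFI : ∫ z, F z ≤ M := by
    calc ∫ z, F z ≤ ∫ z, M * k z := integral_mono hFint (hkint'.const_mul M) hFle
      _ = M := by rw [integral_const_mul, hkint, mul_one]
  have hFI0 : (0 : ℝ) ≤ ∫ z, F z := integral_nonneg hFnn
  -- continuity of slices
  have hslice : ∀ (u : ℝ → EuclideanSpace ℝ (Fin N) → ℝ),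
      ContinuousOn (fun q : ℝ × EuclideanSpace ℝ (Fin N) => u q.1 q.2)
        (Set.Ico 0 T ×ˢ Set.univ) →
      ∀ t ∈ Set.Ico (0 : ℝ) T, Continuous fun y => u t y := by
    intro u hu t ht
    have : Continuous fun y : EuclideanSpace ℝ (Fin N) =>
        (fun q : ℝ × EuclideanSpace ℝ (Fin N) => u q.1 q.2) (t, y) := by
      apply hu.comp_continuous (continuous_const.prodMk continuous_id)
      intro y; exact ⟨ht, Set.mem_univ y⟩
    exact this
  -- integrability of the nonlocal terms
  have hintgr : ∀ (g : EuclideanSpace ℝ (Fin N) → ℝ), Continuous g →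
      ∀ x, Integrable fun y => F (y - x) * g y := by
    intro g hg x
    apply Continuous.integrable_of_hasCompactSupport
    · exact (hFc.comp (continuous_id.sub continuous_const)).mul hg
    · apply HasCompactSupport.intro (isCompact_closedBall x r₀)
      intro y hy
      simp only [Metric.mem_closedBall, not_le] at hy
      have : r₀ ≤ ‖y - x‖ := by
        rw [← dist_eq_norm]; exact hy.le
      simp [hFzero _ this]
  have hshift : ∀ x : EuclideanSpace ℝ (Fin N), ∫ y, F (y - x) = ∫ z, F z := by
    intro x
    exact integral_sub_right_eq_self F x
  -- the key derivative bound
  have derivBound : ∀ t ∈ Set.Ico (0 : ℝ) T, ∀ x (φ : ℝ), 0 ≤ φ →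
      (∀ y, -φ ≤ u₂ t y - u₁ t y) → u₂ t x - u₁ t x ≤ 0 →
      u₁' t x - u₂' t x ≤ K * φ := by
    intro t ht x φ hφ hwφ hw0
    have h₁ := hsub t ht x
    have h₂ := hsup t ht x
    have hI₁ : (∫ y, Real.exp (-μ * (inner ℝ (y - x) ξ : ℝ)) * k (y - x) * u₁ t y)
        = ∫ y, F (y - x) * u₁ t y := by simp only [hFdef]
    have hI₂ : (∫ y, Real.exp (-μ * (inner ℝ (y - x) ξ : ℝ)) * k (y - x) * u₂ t y)
        = ∫ y, F (y - x) * u₂ t y := by simp only [hFdef]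
    rw [hI₁] at h₁; rw [hI₂] at h₂
    have hg₁ := hintgr _ (hslice u₁ hc₁ t ht) x
    have hg₂ := hintgr _ (hslice u₂ hc₂ t ht) x
    -- nonlocal part
    have hIb : (∫ y, F (y - x) * u₁ t y) - (∫ y, F (y - x) * u₂ t y) ≤ M * φ := by
      rw [← integral_sub hg₁ hg₂]
      have step1 : (∫ y, F (y - x) * u₁ t y - F (y - x) * u₂ t y)
          ≤ ∫ y, F (y - x) * φ := by
        apply integral_mono (hg₁.sub hg₂) ((hintgr (fun _ => φ) continuous_const x))
        intro y
        have := hwφ y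
        have hFy : 0 ≤ F (y - x) := hFnn _
        simp only [Pi.sub_apply]
        nlinarith [mul_nonneg (hFnn (y - x)) (by linarith : (0:ℝ) ≤ φ + (u₂ t y - u₁ t y))]
      have step2 : (∫ y, F (y - x) * φ) ≤ M * φ := by
        rw [integral_mul_const, hshift x]
        exact mul_le_mul_of_nonneg_right hFI hφ
      linarith
    -- local part
    have ha := abs_le.mp (hC t x)
    have hw := hwφ x
    have hloc : (u₂ t x - u₁ t x) - (a t x * u₂ t x - a t x * u₁ t x) ≤ (C + 1) * φ := by
      nlinarith [mul_nonneg (by linarith : (0:ℝ) ≤ C + 1)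
          (by linarith : (0:ℝ) ≤ φ + (u₂ t x - u₁ t x)),
        mul_nonneg (by linarith : (0:ℝ) ≤ C + 2 - a t x)
          (by linarith : (0:ℝ) ≤ -(u₂ t x - u₁ t x))]
    have hKexp : K * φ = M * φ + (C + 1) * φ := by rw [hKdef]; ring
    linarith [h₁, h₂, hIb, hloc, hKexp]
  -- main induction: w(t,x) ≥ -β₀ Kⁿ tⁿ / n!
  have main : ∀ n : ℕ, ∀ t ∈ Set.Ico (0 : ℝ) T, ∀ x,
      -(β₀ * K ^ n * t ^ n / (n.factorial : ℝ)) ≤ u₂ t x - u₁ t x := by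
    intro n
    induction n with
    | zero => intro t ht x; simpa using hlb t ht x
    | succ n ih =>
      intro t ht x
      obtain ⟨ht0, htT⟩ := ht
      have hIccsub : Set.Icc (0 : ℝ) t ⊆ Set.Ico 0 T := fun s hs =>
        ⟨hs.1, lt_of_le_of_lt hs.2 htT⟩
      have hfact : (0 : ℝ) < (n.factorial : ℝ) := by positivity
      have hfact1 : ((n + 1).factorial : ℝ) = ((n : ℝ) + 1) * (n.factorial : ℝ) := by
        rw [Nat.factorial_succ]; push_cast; ring
      have hfact1' : (0 : ℝ) < ((n + 1).factorial : ℝ) := by positivity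
      have hmain : ∀ ε : ℝ, 0 < ε →
          u₁ t x - u₂ t x ≤ β₀ * K ^ (n + 1) * t ^ (n + 1) / ((n + 1).factorial : ℝ)
            + ε * (1 + K * t) := by
        intro ε hε
        obtain ⟨B, hBdef⟩ : ∃ B : ℝ → ℝ, B = fun s =>
            β₀ * K ^ (n + 1) * s ^ (n + 1) / ((n + 1).factorial : ℝ) + ε * (1 + K * s) := ⟨_, rfl⟩
        obtain ⟨B', hB'def⟩ : ∃ B' : ℝ → ℝ, B' = fun s =>
            K * (β₀ * K ^ n * s ^ n / (n.factorial : ℝ)) + ε * K := ⟨_, rfl⟩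
        have hB : ∀ s, HasDerivAt B (B' s) s := by
          intro s
          have h1 : HasDerivAt (fun s : ℝ => s ^ (n + 1)) (((n : ℝ) + 1) * s ^ n) s := by
            simpa using hasDerivAt_pow (n + 1) s
          have h2 : HasDerivAt (fun s : ℝ => β₀ * K ^ (n + 1) * s ^ (n + 1) / ((n + 1).factorial : ℝ))
              (β₀ * K ^ (n + 1) * (((n : ℝ) + 1) * s ^ n) / ((n + 1).factorial : ℝ)) s := by
            simpa [mul_div_assoc] using (h1.const_mul (β₀ * K ^ (n + 1))).div_const ((n + 1).factorial : ℝ)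
          have h3 : HasDerivAt (fun s : ℝ => ε * (1 + K * s)) (ε * K) s := by
            have : HasDerivAt (fun s : ℝ => 1 + K * s) K s := by
              simpa using ((hasDerivAt_id s).const_mul K).const_add 1
            simpa using this.const_mul ε
          have h4 := h2.add h3
          rw [hBdef, hB'def]
          refine h4.congr_deriv ?_
          rw [hfact1]
          field_simp
          ring
        have hcontf : ContinuousOn (fun s => u₁ s x - u₂ s x) (Set.Icc 0 t) := by
          have c₁ : ContinuousOn (fun s => u₁ s x) (Set.Ico 0 T) := by
            have : ContinuousOn (fun s : ℝ =>
                (fun q : ℝ × EuclideanSpace ℝ (Fin N) => u₁ q.1 q.2) (s, x))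
                (Set.Ico 0 T) := by
              apply hc₁.comp (Continuous.continuousOn (continuous_id.prodMk continuous_const))
              intro s hs; exact ⟨hs, Set.mem_univ x⟩
            exact this
          have c₂ : ContinuousOn (fun s => u₂ s x) (Set.Ico 0 T) := by
            have : ContinuousOn (fun s : ℝ =>
                (fun q : ℝ × EuclideanSpace ℝ (Fin N) => u₂ q.1 q.2) (s, x))
                (Set.Ico 0 T) := by
              apply hc₂.comp (Continuous.continuousOn (continuous_id.prodMk continuous_const))
              intro s hs; exact ⟨hs, Set.mem_univ x⟩
            exact this
          exact (c₁.sub c₂).mono hIccsub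
        have hderf : ∀ s ∈ Set.Ico (0 : ℝ) t,
            HasDerivWithinAt (fun s => u₁ s x - u₂ s x) (u₁' s x - u₂' s x) (Set.Ici s) s := by
          intro s hs
          have hs' : s ∈ Set.Ico (0 : ℝ) T := ⟨hs.1, lt_trans hs.2 htT⟩
          have hd : HasDerivWithinAt (fun s => u₁ s x - u₂ s x) (u₁' s x - u₂' s x)
              (Set.Ico 0 T) s := (hd₁ x s hs').sub (hd₂ x s hs')
          apply hd.mono_of_mem_nhdsWithin
          rw [mem_nhdsWithin]
          refine ⟨Set.Iio T, isOpen_Iio, hs'.2, ?_⟩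
          intro y hy
          exact ⟨le_trans hs.1 hy.2, hy.1⟩
        have hbound : ∀ s ∈ Set.Ico (0 : ℝ) t,
            (fun s => u₁ s x - u₂ s x) s = B s → u₁' s x - u₂' s x < B' s := by
          intro s hs heq
          have hs' : s ∈ Set.Ico (0 : ℝ) T := ⟨hs.1, lt_trans hs.2 htT⟩
          have hsn : (0 : ℝ) ≤ s ^ n := pow_nonneg hs.1 n
          have hsn1 : (0 : ℝ) ≤ s ^ (n + 1) := pow_nonneg hs.1 (n + 1)
          have hBpos : 0 < B s := by
            have h1 : 0 ≤ β₀ * K ^ (n + 1) * s ^ (n + 1) / ((n + 1).factorial : ℝ) := by positivity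
            have h2 : 0 < ε * (1 + K * s) := by
              have : 0 < 1 + K * s := by nlinarith [hs.1]
              positivity
            rw [hBdef]; dsimp only; linarith
          have hwneg : u₂ s x - u₁ s x ≤ 0 := by
            have heq' : u₁ s x - u₂ s x = B s := heq
            linarith
          have hφnn : (0 : ℝ) ≤ β₀ * K ^ n * s ^ n / (n.factorial : ℝ) := by positivity
          have hdb := derivBound s hs' x (β₀ * K ^ n * s ^ n / (n.factorial : ℝ)) hφnn
            (fun y => ih s hs' y) hwneg
          have : 0 < ε * K := by positivity
          calc u₁' s x - u₂' s x ≤ K * (β₀ * K ^ n * s ^ n / (n.factorial : ℝ)) := hdb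
            _ < B' s := by rw [hB'def]; dsimp only; linarith
        have hfa : (fun s => u₁ s x - u₂ s x) 0 ≤ B 0 := by
          have h1 : B 0 = ε := by rw [hBdef]; simp
          show u₁ 0 x - u₂ 0 x ≤ B 0
          rw [h1]
          have := hinit x
          linarith
        have := image_le_of_deriv_right_lt_deriv_boundary hcontf hderf hfa hB hbound
          (Set.right_mem_Icc.mpr ht0)
        have h5 := this
        rw [hBdef] at h5
        simpa using h5
      -- let ε → 0
      have hc : (0 : ℝ) < 1 + K * t := by nlinarith
      have hfinal : u₁ t x - u₂ t x ≤ β₀ * K ^ (n + 1) * t ^ (n + 1) / ((n + 1).factorial : ℝ) := by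
        apply le_of_forall_pos_le_add
        intro δ hδ
        have := hmain (δ / (1 + K * t)) (by positivity)
        have hd : (δ / (1 + K * t)) * (1 + K * t) = δ := by field_simp
        linarith [this, hd.le, hd.ge]
      linarith
  -- conclude by letting n → ∞
  intro t ht x
  have hseq : ∀ n : ℕ, -(β₀ * ((K * t) ^ n / (n.factorial : ℝ))) ≤ u₂ t x - u₁ t x := by
    intro n
    have := main n t ht x
    calc -(β₀ * ((K * t) ^ n / (n.factorial : ℝ)))
        = -(β₀ * K ^ n * t ^ n / (n.factorial : ℝ)) := by rw [mul_pow]; ring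
      _ ≤ u₂ t x - u₁ t x := this
  have hlim : Filter.Tendsto (fun n : ℕ => -(β₀ * ((K * t) ^ n / (n.factorial : ℝ))))
      Filter.atTop (nhds 0) := by
    have h := (FloorSemiring.tendsto_pow_div_factorial_atTop (K * t)).const_mul β₀
    have := h.neg
    simpa using this
  have : (0 : ℝ) ≤ u₂ t x - u₁ t x :=
    le_of_tendsto hlim (Filter.Eventually.of_forall hseq)
  linarith
end

section
/- (Strong monotonicity on periodic functions.) Let Φ(t) denote the solution operator of the linear nonlocal equation ∂u/∂t = ∫ e^{−μ(y−x)·ξ}k(y−x)u(t,y)dy − u + a(t,x)u restricted to the space X_p of continuous spatially periodic functions. If u₁, u₂ ∈ X_p with u₁ ≤ u₂ and u₁ ≠ u₂, then (Φ(t)u₂)(x) − (Φ(t)u₁)(x) > 0 for every x ∈ ℝ^N and every t > 0. -/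
open MeasureTheory


private lemma aux_one_shift {N : ℕ} (p : Fin N → ℝ) (f : EuclideanSpace ℝ (Fin N) → ℝ)
    (hf : ∀ x i, f (x + p i • EuclideanSpace.single i (1 : ℝ)) = f x)
    (i : Fin N) (n : ℤ) (x : EuclideanSpace ℝ (Fin N)) :
    f (x + (n : ℝ) • (p i • EuclideanSpace.single i (1 : ℝ))) = f x := by
  induction n using Int.induction_on with
  | zero => simp
  | succ n ih =>
      have h : x + ((n + 1 : ℤ) : ℝ) • (p i • EuclideanSpace.single i (1 : ℝ))
          = (x + ((n : ℤ) : ℝ) • (p i • EuclideanSpace.single i (1 : ℝ)))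
            + p i • EuclideanSpace.single i (1 : ℝ) := by
        push_cast
        module
      rw [h, hf, ih]
  | pred n ih =>
      have h : x + ((-n : ℤ) : ℝ) • (p i • EuclideanSpace.single i (1 : ℝ))
          = (x + ((-n - 1 : ℤ) : ℝ) • (p i • EuclideanSpace.single i (1 : ℝ)))
            + p i • EuclideanSpace.single i (1 : ℝ) := by
        push_cast
        module
      rw [h, hf] at ih
      exact ih

private lemma aux_shift {N : ℕ} (p : Fin N → ℝ) (f : EuclideanSpace ℝ (Fin N) → ℝ)
    (hf : ∀ x i, f (x + p i • EuclideanSpace.single i (1 : ℝ)) = f x)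
    (m : Fin N → ℤ) (x : EuclideanSpace ℝ (Fin N)) :
    f (x + ∑ i, (m i : ℝ) • (p i • EuclideanSpace.single i (1 : ℝ))) = f x := by
  have key : ∀ s : Finset (Fin N), ∀ x : EuclideanSpace ℝ (Fin N),
      f (x + ∑ i ∈ s, (m i : ℝ) • (p i • EuclideanSpace.single i (1 : ℝ))) = f x := by
    intro s
    induction s using Finset.induction with
    | empty => intro x; simp
    | insert _ _ hi ih =>
        intro x
        rename_i j s'
        rw [Finset.sum_insert hi, ← add_assoc, show x + (m j : ℝ) • (p j • EuclideanSpace.single j (1:ℝ))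
          + ∑ i ∈ s', (m i : ℝ) • (p i • EuclideanSpace.single i (1 : ℝ))
          = (x + (m j : ℝ) • (p j • EuclideanSpace.single j (1:ℝ)))
          + ∑ i ∈ s', (m i : ℝ) • (p i • EuclideanSpace.single i (1 : ℝ)) from rfl, ih,
          aux_one_shift p f hf]
  exact key Finset.univ x

private lemma aux_rep {N : ℕ} (p : Fin N → ℝ) (hp : ∀ i, 0 < p i)
    (f : EuclideanSpace ℝ (Fin N) → ℝ)
    (hf : ∀ x i, f (x + p i • EuclideanSpace.single i (1 : ℝ)) = f x)
    (y : EuclideanSpace ℝ (Fin N)) :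
    ∃ y' ∈ Metric.closedBall (0 : EuclideanSpace ℝ (Fin N)) (Real.sqrt (∑ i, (p i) ^ 2)),
      f y' = f y := by
  classical
  set m : Fin N → ℤ := fun i => -⌊y i / p i⌋ with hm
  refine ⟨y + ∑ i, (m i : ℝ) • (p i • EuclideanSpace.single i (1 : ℝ)), ?_, aux_shift p f hf m y⟩
  have hcoord : ∀ j, (y + ∑ i, (m i : ℝ) • (p i • EuclideanSpace.single i (1 : ℝ))) j
      = y j - (⌊y j / p j⌋ : ℝ) * p j := by
    intro j
    have h1 : (∑ i, (m i : ℝ) • (p i • EuclideanSpace.single i (1 : ℝ))) j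
        = ∑ i, ((m i : ℝ) • (p i • EuclideanSpace.single i (1 : ℝ))) j :=
      by rw [WithLp.ofLp_sum]; exact Finset.sum_apply j Finset.univ _
    have h2 : ∀ i, ((m i : ℝ) • (p i • EuclideanSpace.single i (1 : ℝ))) j
        = (m i : ℝ) * p i * (if j = i then 1 else 0) := by
      intro i
      simp [EuclideanSpace.single_apply, mul_assoc]
    have : (y + ∑ i, (m i : ℝ) • (p i • EuclideanSpace.single i (1 : ℝ))) j
        = y j + ∑ i, (m i : ℝ) * p i * (if j = i then 1 else 0) := by
      simp only [PiLp.add_apply, h1]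
      congr 1
      exact Finset.sum_congr rfl fun i _ => h2 i
    rw [this, Finset.sum_eq_single j (by intro b _ hb; simp [Ne.symm hb]) (by simp)]
    simp [hm]
    ring
  have habs : ∀ j, |(y + ∑ i, (m i : ℝ) • (p i • EuclideanSpace.single i (1 : ℝ))) j| ≤ p j := by
    intro j
    rw [hcoord j]
    have hq := hp j
    have h1 : y j - (⌊y j / p j⌋ : ℝ) * p j = p j * Int.fract (y j / p j) := by
      rw [Int.fract]; field_simp
    rw [h1, abs_mul, abs_of_pos hq]
    nlinarith [Int.fract_nonneg (y j / p j), Int.fract_lt_one (y j / p j),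
      abs_of_nonneg (Int.fract_nonneg (y j / p j))]
  rw [Metric.mem_closedBall, dist_zero_right, EuclideanSpace.norm_eq]
  apply Real.sqrt_le_sqrt
  apply Finset.sum_le_sum
  intro j _
  have := habs j
  have h2 : ‖(y + ∑ i, (m i : ℝ) • (p i • EuclideanSpace.single i (1 : ℝ))) j‖
      = |(y + ∑ i, (m i : ℝ) • (p i • EuclideanSpace.single i (1 : ℝ))) j| := rfl
  rw [h2]
  nlinarith [abs_nonneg ((y + ∑ i, (m i : ℝ) • (p i • EuclideanSpace.single i (1 : ℝ))) j)]

private lemma aux_ker_cont {N : ℕ} (ξ : EuclideanSpace ℝ (Fin N)) (μ : ℝ)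
    (k : EuclideanSpace ℝ (Fin N) → ℝ) (hkc : Continuous k)
    (x : EuclideanSpace ℝ (Fin N)) (φ : EuclideanSpace ℝ (Fin N) → ℝ) (hφ : Continuous φ) :
    Continuous fun y => Real.exp (-μ * (inner ℝ (y - x) ξ : ℝ)) * k (y - x) * φ y := by
  apply Continuous.mul _ hφ
  apply Continuous.mul _ (hkc.comp (continuous_id.sub continuous_const))
  exact Real.continuous_exp.comp (continuous_const.mul
    ((continuous_id.sub continuous_const).inner continuous_const))

private lemma aux_ker_integrable {N : ℕ} (ξ : EuclideanSpace ℝ (Fin N)) (μ : ℝ)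
    (k : EuclideanSpace ℝ (Fin N) → ℝ) (r₀ : ℝ) (hkc : Continuous k)
    (hkzero : ∀ z, r₀ ≤ ‖z‖ → k z = 0)
    (x : EuclideanSpace ℝ (Fin N)) (φ : EuclideanSpace ℝ (Fin N) → ℝ) (hφ : Continuous φ) :
    Integrable fun y => Real.exp (-μ * (inner ℝ (y - x) ξ : ℝ)) * k (y - x) * φ y := by
  apply (aux_ker_cont ξ μ k hkc x φ hφ).integrable_of_hasCompactSupport
  apply HasCompactSupport.intro (isCompact_closedBall x r₀)
  intro y hy
  have : r₀ ≤ ‖y - x‖ := by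
    rw [Metric.mem_closedBall, dist_eq_norm] at hy
    linarith [not_le.mp hy]
  rw [hkzero _ this]
  ring

private lemma aux_ker_shift {N : ℕ} (ξ : EuclideanSpace ℝ (Fin N)) (μ : ℝ)
    (k : EuclideanSpace ℝ (Fin N) → ℝ) (x : EuclideanSpace ℝ (Fin N)) :
    (∫ y, Real.exp (-μ * (inner ℝ (y - x) ξ : ℝ)) * k (y - x))
      = ∫ z, Real.exp (-μ * (inner ℝ z ξ : ℝ)) * k z :=
  integral_sub_right_eq_self (fun z => Real.exp (-μ * (inner ℝ z ξ : ℝ)) * k z) x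

private lemma aux_J_lower {N : ℕ} (ξ : EuclideanSpace ℝ (Fin N)) (μ : ℝ)
    (k : EuclideanSpace ℝ (Fin N) → ℝ) (r₀ : ℝ) (hkc : Continuous k)
    (hknn : ∀ z, 0 ≤ k z) (hkzero : ∀ z, r₀ ≤ ‖z‖ → k z = 0)
    (x : EuclideanSpace ℝ (Fin N)) (φ : EuclideanSpace ℝ (Fin N) → ℝ) (hφ : Continuous φ)
    (c : ℝ) (hc : ∀ y, -c ≤ φ y) :
    -((∫ z, Real.exp (-μ * (inner ℝ z ξ : ℝ)) * k z) * c)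
      ≤ ∫ y, Real.exp (-μ * (inner ℝ (y - x) ξ : ℝ)) * k (y - x) * φ y := by
  have hI1 := aux_ker_integrable ξ μ k r₀ hkc hkzero x φ hφ
  have hI2 := aux_ker_integrable ξ μ k r₀ hkc hkzero x (fun _ => -c) continuous_const
  have hmono : (∫ y, Real.exp (-μ * (inner ℝ (y - x) ξ : ℝ)) * k (y - x) * (-c))
      ≤ ∫ y, Real.exp (-μ * (inner ℝ (y - x) ξ : ℝ)) * k (y - x) * φ y := by
    apply integral_mono hI2 hI1
    intro y
    exact mul_le_mul_of_nonneg_left (hc y)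
      (mul_nonneg (Real.exp_pos _).le (hknn _))
  calc -((∫ z, Real.exp (-μ * (inner ℝ z ξ : ℝ)) * k z) * c)
      = (∫ y, Real.exp (-μ * (inner ℝ (y - x) ξ : ℝ)) * k (y - x)) * (-c) := by
        rw [aux_ker_shift]; ring
    _ = ∫ y, Real.exp (-μ * (inner ℝ (y - x) ξ : ℝ)) * k (y - x) * (-c) :=
        (integral_mul_const _ _).symm
    _ ≤ _ := hmono

private lemma aux_ftc {f : ℝ → ℝ} (hf : Continuous f) (b : ℝ) :
    HasDerivAt (fun u => ∫ x in (0:ℝ)..u, f x) (f b) b :=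
  intervalIntegral.integral_hasDerivAt_right (hf.intervalIntegrable _ _)
    (hf.stronglyMeasurableAtFilter _ _) hf.continuousAt

/-- Strong monotonicity of the solution operator of the linear nonlocal
equation on spatially periodic functions: if `v₁ ≤ v₂`, `v₁ ≠ v₂`, then the corresponding
solutions satisfy `u₁(t,x) < u₂(t,x)` for every `t > 0` and every `x`. -/
theorem strong_monotonicity_periodic {N : ℕ}
    (ξ : EuclideanSpace ℝ (Fin N)) (hξ : ‖ξ‖ = 1) (μ : ℝ)
    (k : EuclideanSpace ℝ (Fin N) → ℝ) (r₀ : ℝ) (hr₀ : 0 < r₀)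
    (hkc : Continuous k) (hknn : ∀ z, 0 ≤ k z)
    (hkpos : ∀ z, ‖z‖ < r₀ → 0 < k z) (hkzero : ∀ z, r₀ ≤ ‖z‖ → k z = 0)
    (hkint : ∫ z, k z = 1)
    (p : Fin N → ℝ) (hp : ∀ i, 0 < p i)
    (a : ℝ → EuclideanSpace ℝ (Fin N) → ℝ)
    (hac : Continuous fun q : ℝ × EuclideanSpace ℝ (Fin N) => a q.1 q.2)
    (hab : ∃ C : ℝ, ∀ t x, |a t x| ≤ C)
    (v₁ v₂ : EuclideanSpace ℝ (Fin N) → ℝ)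
    (hv₁c : Continuous v₁) (hv₂c : Continuous v₂)
    (hv₁per : ∀ x i, v₁ (x + p i • EuclideanSpace.single i (1 : ℝ)) = v₁ x)
    (hv₂per : ∀ x i, v₂ (x + p i • EuclideanSpace.single i (1 : ℝ)) = v₂ x)
    (hle : ∀ x, v₁ x ≤ v₂ x) (hne : v₁ ≠ v₂)
    (u₁ u₂ : ℝ → EuclideanSpace ℝ (Fin N) → ℝ)
    (hc₁ : ContinuousOn (fun q : ℝ × EuclideanSpace ℝ (Fin N) => u₁ q.1 q.2)
      (Set.Ici 0 ×ˢ Set.univ))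
    (hc₂ : ContinuousOn (fun q : ℝ × EuclideanSpace ℝ (Fin N) => u₂ q.1 q.2)
      (Set.Ici 0 ×ˢ Set.univ))
    (hinit₁ : ∀ x, u₁ 0 x = v₁ x) (hinit₂ : ∀ x, u₂ 0 x = v₂ x)
    (hper₁ : ∀ t x i, u₁ t (x + p i • EuclideanSpace.single i (1 : ℝ)) = u₁ t x)
    (hper₂ : ∀ t x i, u₂ t (x + p i • EuclideanSpace.single i (1 : ℝ)) = u₂ t x)
    (heq₁ : ∀ x, ∀ t ∈ Set.Ici (0 : ℝ),
      HasDerivWithinAt (fun s => u₁ s x)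
        ((∫ y, Real.exp (-μ * (inner ℝ (y - x) ξ : ℝ)) * k (y - x) * u₁ t y) -
          u₁ t x + a t x * u₁ t x) (Set.Ici 0) t)
    (heq₂ : ∀ x, ∀ t ∈ Set.Ici (0 : ℝ),
      HasDerivWithinAt (fun s => u₂ s x)
        ((∫ y, Real.exp (-μ * (inner ℝ (y - x) ξ : ℝ)) * k (y - x) * u₂ t y) -
          u₂ t x + a t x * u₂ t x) (Set.Ici 0) t) :
    ∀ t : ℝ, 0 < t → ∀ x, u₁ t x < u₂ t x := by
  classical
  obtain ⟨C, hC⟩ := hab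
  have hC0 : 0 ≤ C := le_trans (abs_nonneg _) (hC 0 0)
  set w : ℝ → EuclideanSpace ℝ (Fin N) → ℝ := fun t x => u₂ t x - u₁ t x with hw
  -- continuity of the extended function
  have hproj : Continuous fun q : ℝ × EuclideanSpace ℝ (Fin N) => ((max q.1 0 : ℝ), q.2) :=
    (continuous_fst.max continuous_const).prodMk continuous_snd
  have hmem : ∀ q : ℝ × EuclideanSpace ℝ (Fin N),
      ((max q.1 0 : ℝ), q.2) ∈ Set.Ici (0:ℝ) ×ˢ (Set.univ : Set (EuclideanSpace ℝ (Fin N))) :=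
    fun q => ⟨(le_max_right q.1 0 : (0:ℝ) ≤ max q.1 0), trivial⟩
  have hwc : Continuous fun q : ℝ × EuclideanSpace ℝ (Fin N) => w (max q.1 0) q.2 := by
    have h2 : Continuous fun q : ℝ × EuclideanSpace ℝ (Fin N) => u₂ (max q.1 0) q.2 :=
      hc₂.comp_continuous hproj hmem
    have h1 : Continuous fun q : ℝ × EuclideanSpace ℝ (Fin N) => u₁ (max q.1 0) q.2 :=
      hc₁.comp_continuous hproj hmem
    exact h2.sub h1
  have hwcx : ∀ x, Continuous fun s => w (max s 0) x :=
    fun x => hwc.comp (continuous_id.prodMk continuous_const)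
  have hwct : ∀ t, 0 ≤ t → Continuous fun y => w t y := by
    intro t ht
    have h' : Continuous fun y : EuclideanSpace ℝ (Fin N) => w (max t 0) y :=
      hwc.comp (Continuous.prodMk_right t)
    rw [max_eq_left ht] at h'
    exact h'
  have hwcox : ∀ x, ContinuousOn (fun s => w s x) (Set.Ici 0) := by
    intro x
    apply (hwcx x).continuousOn.congr
    intro s hs
    simp [max_eq_left (Set.mem_Ici.mp hs)]
  -- periodicity of w t
  have hwper : ∀ t x i, w t (x + p i • EuclideanSpace.single i (1 : ℝ)) = w t x := by
    intro t x i; simp only [hw]; rw [hper₁, hper₂]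
  -- integrability
  have hInt : ∀ (φ : EuclideanSpace ℝ (Fin N) → ℝ), Continuous φ →
      ∀ x, Integrable fun y => Real.exp (-μ * (inner ℝ (y - x) ξ : ℝ)) * k (y - x) * φ y :=
    fun φ hφ x => aux_ker_integrable ξ μ k r₀ hkc hkzero x φ hφ
  -- derivative of w
  have hwd : ∀ x, ∀ t, 0 ≤ t → HasDerivWithinAt (fun s => w s x)
      ((∫ y, Real.exp (-μ * (inner ℝ (y - x) ξ : ℝ)) * k (y - x) * w t y) -
        w t x + a t x * w t x) (Set.Ici 0) t := by
    intro x t ht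
    have h := (heq₂ x t ht).sub (heq₁ x t ht)
    have hcu₂ : Continuous fun y => u₂ t y :=
      hc₂.comp_continuous (continuous_const.prodMk continuous_id) (fun y => ⟨ht, trivial⟩)
    have hcu₁ : Continuous fun y => u₁ t y :=
      hc₁.comp_continuous (continuous_const.prodMk continuous_id) (fun y => ⟨ht, trivial⟩)
    have hI2 := hInt _ hcu₂ x
    have hI1 := hInt _ hcu₁ x
    have hsplit : (∫ y, Real.exp (-μ * (inner ℝ (y - x) ξ : ℝ)) * k (y - x) * w t y)
        = (∫ y, Real.exp (-μ * (inner ℝ (y - x) ξ : ℝ)) * k (y - x) * u₂ t y)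
          - ∫ y, Real.exp (-μ * (inner ℝ (y - x) ξ : ℝ)) * k (y - x) * u₁ t y := by
      rw [← integral_sub hI2 hI1]
      congr 1
      funext y
      simp only [hw]
      ring
    rw [hsplit]
    refine h.congr_deriv ?_
    simp only [hw]
    ring
  -- Sup machinery
  set R : ℝ := Real.sqrt (∑ i, (p i) ^ 2) with hR
  set K0 : Set (EuclideanSpace ℝ (Fin N)) := Metric.closedBall 0 R with hK0def
  have hK0 : IsCompact K0 := isCompact_closedBall _ _
  have hK0ne : K0.Nonempty := ⟨0, by
    simp only [hK0def, Metric.mem_closedBall, dist_self]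
    rw [hR]; positivity⟩
  set M : ℝ → ℝ := fun t => sSup ((fun y => -(w (max t 0) y)) '' K0) with hM
  have hMc : Continuous M := hK0.continuous_sSup (hwc.neg)
  have hMbdd : ∀ t, BddAbove ((fun y => -(w (max t 0) y)) '' K0) := by
    intro t
    exact (hK0.bddAbove_image ((hwc.comp (Continuous.prodMk_right t)).neg.continuousOn))
  have hMge : ∀ t, 0 ≤ t → ∀ y, -(w t y) ≤ M t := by
    intro t ht y
    obtain ⟨y', hy'K, hy'⟩ := aux_rep p hp (w t) (hwper t) y
    have heq : -(w t y) = -(w (max t 0) y') := by rw [max_eq_left ht, hy']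
    rw [heq]
    exact le_csSup (hMbdd t) ⟨y', hy'K, rfl⟩
  set Mp : ℝ → ℝ := fun t => max (M t) 0 with hMp
  have hMpc : Continuous Mp := hMc.max continuous_const
  have hMpnn : ∀ t, 0 ≤ Mp t := fun t => le_max_right _ _
  have hMpge : ∀ t, 0 ≤ t → ∀ y, -(Mp t) ≤ w t y := by
    intro t ht y
    have := hMge t ht y
    have h2 : M t ≤ Mp t := le_max_left _ _
    linarith
  set B : ℝ := ∫ z, Real.exp (-μ * (inner ℝ z ξ : ℝ)) * k z with hB
  have hB0 : 0 ≤ B :=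
    integral_nonneg fun z => mul_nonneg (Real.exp_pos _).le (hknn z)
  -- lower bound on nonlocal term
  have hJge : ∀ t, 0 ≤ t → ∀ x, -(B * Mp t)
      ≤ ∫ y, Real.exp (-μ * (inner ℝ (y - x) ξ : ℝ)) * k (y - x) * w t y :=
    fun t ht x => aux_J_lower ξ μ k r₀ hkc hknn hkzero x (w t) (hwct t ht) (Mp t) (hMpge t ht)
  -- a-bounds
  have haC : ∀ t x, -C ≤ a t x ∧ a t x ≤ C := fun t x => abs_le.mp (hC t x)
  -- initial nonnegativity
  have hw0 : ∀ x, 0 ≤ w 0 x := by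
    intro x
    simp only [hw, hinit₁, hinit₂]
    linarith [hle x]
  -- STEP 1 : nonnegativity of w for all t ≥ 0
  have hwnn : ∀ t, 0 ≤ t → ∀ x, 0 ≤ w t x := by
    intro T hT
    set K : ℝ := B * Real.exp ((1 + C) * T) * Real.exp ((1 + C) * T) with hKdef
    have hKnn : 0 ≤ K := mul_nonneg (mul_nonneg hB0 (Real.exp_pos _).le) (Real.exp_pos _).le
    set G : ℝ → ℝ := fun t => ∫ s in (0:ℝ)..t, Mp s with hG
    have hGd : ∀ t, HasDerivAt G (Mp t) t := fun t => aux_ftc hMpc t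
    have hGc : Continuous G := by
      have : Differentiable ℝ G := fun t => (hGd t).differentiableAt
      exact this.continuous
    have hGnn : ∀ t, 0 ≤ t → 0 ≤ G t := by
      intro t ht
      exact intervalIntegral.integral_nonneg ht (fun s _ => hMpnn s)
    -- Claim A
    have hA : ∀ x, ∀ t, t ∈ Set.Icc (0:ℝ) T → -(w t x) ≤ K * G t := by
      intro x t htT
      set Af : ℝ → ℝ := fun s => ∫ r in (0:ℝ)..s, (a r x - 1) with hAf
      have hacx : Continuous fun r => a r x - 1 :=
        (hac.comp (continuous_id.prodMk continuous_const)).sub continuous_const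
      have hAd : ∀ s, HasDerivAt Af (a s x - 1) s := fun s => aux_ftc hacx s
      have hAc : Continuous Af :=
        Differentiable.continuous (fun s => (hAd s).differentiableAt)
      have hexpc : Continuous fun r => Real.exp ((1 + C) * r) * Mp r :=
        (Real.continuous_exp.comp (continuous_const.mul continuous_id)).mul hMpc
      set g : ℝ → ℝ := fun s =>
        Real.exp (-(Af s)) * w s x + B * ∫ r in (0:ℝ)..s, Real.exp ((1 + C) * r) * Mp r with hg
      have hgc : ContinuousOn g (Set.Icc 0 T) := by
        apply ContinuousOn.add
        · exact ((Real.continuous_exp.comp hAc.neg).continuousOn).mul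
            ((hwcox x).mono (fun s hs => hs.1))
        · apply Continuous.continuousOn
          apply continuous_const.mul
          exact Differentiable.continuous (fun s => (aux_ftc hexpc s).differentiableAt)
      set g' : ℝ → ℝ := fun s =>
        Real.exp (-(Af s)) * (∫ y, Real.exp (-μ * (inner ℝ (y - x) ξ : ℝ)) * k (y - x) * w s y)
          + B * (Real.exp ((1 + C) * s) * Mp s) with hg'
      have hgderiv : ∀ s ∈ Set.Ioo (0:ℝ) T, HasDerivAt g (g' s) s := by
        intro s hs
        have hs0 : (0:ℝ) < s := hs.1
        have hd1 : HasDerivAt (fun s' => Real.exp (-(Af s')))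
            (Real.exp (-(Af s)) * (-(a s x - 1))) s := ((hAd s).neg).exp
        have hdw : HasDerivAt (fun s' => w s' x)
            ((∫ y, Real.exp (-μ * (inner ℝ (y - x) ξ : ℝ)) * k (y - x) * w s y) -
              w s x + a s x * w s x) s :=
          (hwd x s hs0.le).hasDerivAt (Ici_mem_nhds hs0)
        have hd2 := hd1.mul hdw
        have hd3 : HasDerivAt (fun s' => B * ∫ r in (0:ℝ)..s', Real.exp ((1 + C) * r) * Mp r)
            (B * (Real.exp ((1 + C) * s) * Mp s)) s := (aux_ftc hexpc s).const_mul B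
        have := hd2.add hd3
        refine this.congr_deriv ?_
        simp only [hg']
        ring
      have hg'nn : ∀ s ∈ Set.Ioo (0:ℝ) T, 0 ≤ g' s := by
        intro s hs
        have hs0 : (0:ℝ) < s := hs.1
        have h1 := hJge s hs0.le x
        have hAfle : -(Af s) ≤ (1 + C) * s := by
          have : -((1 + C) * s) ≤ Af s := by
            have hconst : (∫ r in (0:ℝ)..s, (-(1 + C) : ℝ)) ≤ Af s := by
              apply intervalIntegral.integral_mono_on hs0.le
                (intervalIntegrable_const) (hacx.intervalIntegrable _ _)
              intro r _
              linarith [(haC r x).1]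
            rw [intervalIntegral.integral_const] at hconst
            simp at hconst
            nlinarith [hconst]
          linarith
        have h2 : Real.exp (-(Af s)) ≤ Real.exp ((1 + C) * s) := Real.exp_le_exp.mpr hAfle
        set Jv : ℝ := ∫ y, Real.exp (-μ * (inner ℝ (y - x) ξ : ℝ)) * k (y - x) * w s y with hJv
        simp only [hg', ← hJv]
        rcases le_or_gt 0 Jv with hJ | hJ
        · have := mul_nonneg (Real.exp_pos (-(Af s))).le hJ
          have h4 : 0 ≤ B * (Real.exp ((1 + C) * s) * Mp s) :=
            mul_nonneg hB0 (mul_nonneg (Real.exp_pos _).le (hMpnn s))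
          linarith
        · nlinarith [mul_nonneg (sub_nonneg.mpr h2) (neg_nonneg.mpr hJ.le),
            mul_nonneg (Real.exp_pos ((1 + C) * s)).le (by linarith : 0 ≤ Jv + B * Mp s)]
      have hgm : MonotoneOn g (Set.Icc 0 T) := by
        apply monotoneOn_of_hasDerivWithinAt_nonneg (convex_Icc 0 T) hgc
          (f' := g')
        · intro s hs
          rw [interior_Icc] at hs
          exact ((hgderiv s hs).hasDerivWithinAt)
        · intro s hs
          rw [interior_Icc] at hs
          exact hg'nn s hs
      have hg0 : g 0 = w 0 x := by
        simp [hg, hAf, intervalIntegral.integral_same]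
      have hmono0t : g 0 ≤ g t := hgm ⟨le_refl 0, hT⟩ htT htT.1
      rw [hg0] at hmono0t
      -- bound the integral term
      have hintb : (∫ r in (0:ℝ)..t, Real.exp ((1 + C) * r) * Mp r)
          ≤ Real.exp ((1 + C) * T) * G t := by
        have : Real.exp ((1 + C) * T) * G t
            = ∫ r in (0:ℝ)..t, Real.exp ((1 + C) * T) * Mp r := by
          rw [hG, intervalIntegral.integral_const_mul]
        rw [this]
        apply intervalIntegral.integral_mono_on htT.1
          (hexpc.intervalIntegrable _ _)
          ((continuous_const.mul hMpc).intervalIntegrable _ _)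
        intro r hr
        apply mul_le_mul_of_nonneg_right _ (hMpnn r)
        apply Real.exp_le_exp.mpr
        have : r ≤ T := le_trans hr.2 htT.2
        nlinarith [this, hC0]
      have hAfub : Af t ≤ (1 + C) * T := by
        have hconst : Af t ≤ ∫ r in (0:ℝ)..t, ((1 + C) : ℝ) := by
          apply intervalIntegral.integral_mono_on htT.1
            (hacx.intervalIntegrable _ _) intervalIntegrable_const
          intro r _
          linarith [(haC r x).2]
        rw [intervalIntegral.integral_const] at hconst
        simp at hconst
        nlinarith [hconst, htT.1, htT.2, hC0]
      have hexpA : Real.exp (Af t) ≤ Real.exp ((1 + C) * T) := Real.exp_le_exp.mpr hAfub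
      -- finish
      have h5 : -(B * (Real.exp ((1 + C) * T) * G t)) ≤ Real.exp (-(Af t)) * w t x := by
        have hBt : B * (∫ r in (0:ℝ)..t, Real.exp ((1 + C) * r) * Mp r)
            ≤ B * (Real.exp ((1 + C) * T) * G t) := mul_le_mul_of_nonneg_left hintb hB0
        have := hw0 x
        simp only [hg] at hmono0t
        linarith
      have hE : Real.exp (Af t) * Real.exp (-(Af t)) = 1 := by
        rw [← Real.exp_add]; simp
      have h6 : -(w t x) ≤ Real.exp (Af t) * (B * (Real.exp ((1 + C) * T) * G t)) := by
        have h7 := mul_le_mul_of_nonneg_left h5 (Real.exp_pos (Af t)).le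
        rw [show Real.exp (Af t) * (Real.exp (-(Af t)) * w t x)
          = (Real.exp (Af t) * Real.exp (-(Af t))) * w t x from by ring, hE, one_mul] at h7
        linarith
      calc -(w t x) ≤ Real.exp (Af t) * (B * (Real.exp ((1 + C) * T) * G t)) := h6
        _ ≤ Real.exp ((1 + C) * T) * (B * (Real.exp ((1 + C) * T) * G t)) := by
            apply mul_le_mul_of_nonneg_right hexpA
            exact mul_nonneg hB0 (mul_nonneg (Real.exp_pos _).le (hGnn t htT.1))
        _ = K * G t := by rw [hKdef]; ring
    -- Claim B : Mp ≤ K G on [0,T]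
    have hMKG : ∀ t, t ∈ Set.Icc (0:ℝ) T → Mp t ≤ K * G t := by
      intro t ht
      have hMle : M t ≤ K * G t := by
        apply csSup_le (hK0ne.image _)
        rintro _ ⟨y, hyK, rfl⟩
        rw [max_eq_left ht.1]
        exact hA y t ht
      exact max_le hMle (mul_nonneg hKnn (hGnn t ht.1))
    -- Claim C : G T = 0
    have hGT : G T ≤ 0 := by
      set h : ℝ → ℝ := fun t => Real.exp (-(K * t)) * G t with hh
      have hhd : ∀ t, HasDerivAt h (Real.exp (-(K * t)) * (Mp t - K * G t)) t := by
        intro t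
        have hd1 : HasDerivAt (fun t' => Real.exp (-(K * t')))
            (Real.exp (-(K * t)) * (-K)) t := by
          have : HasDerivAt (fun t' : ℝ => -(K * t')) (-(K * 1)) t :=
            ((hasDerivAt_id t).const_mul K).neg
          simpa using this.exp
        have := hd1.mul (hGd t)
        refine this.congr_deriv ?_
        ring
      have hanti : AntitoneOn h (Set.Icc 0 T) := by
        have : MonotoneOn (fun t => -(h t)) (Set.Icc 0 T) := by
          apply monotoneOn_of_hasDerivWithinAt_nonneg (convex_Icc 0 T)
            (f' := fun t => -(Real.exp (-(K * t)) * (Mp t - K * G t)))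
          · exact (Continuous.continuousOn (by
              exact ((Real.continuous_exp.comp
                ((continuous_const.mul continuous_id).neg)).mul hGc).neg))
          · intro s hs
            exact ((hhd s).neg).hasDerivWithinAt
          · intro s hs
            rw [interior_Icc] at hs
            have := hMKG s ⟨hs.1.le, hs.2.le⟩
            have hE := (Real.exp_pos (-(K * s))).le
            nlinarith [mul_nonneg hE (sub_nonneg.mpr this)]
        intro s hs t' ht' hst
        have := this hs ht' hst
        dsimp only at this
        linarith
      have h0 : h 0 = 0 := by simp [hh, hG, intervalIntegral.integral_same]
      have hTmem : T ∈ Set.Icc (0:ℝ) T := ⟨hT, le_refl T⟩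
      have h0mem : (0:ℝ) ∈ Set.Icc (0:ℝ) T := ⟨le_refl 0, hT⟩
      have hTle := hanti h0mem hTmem hT
      rw [h0] at hTle
      have hEp := Real.exp_pos (-(K * T))
      by_contra hGc
      push_neg at hGc
      simp only [hh] at hTle
      nlinarith [mul_pos hEp hGc]
    intro x
    have := hA x T ⟨hT, le_refl T⟩
    nlinarith [hGnn T hT, mul_nonneg hKnn (hGnn T hT), mul_le_mul_of_nonneg_left hGT hKnn]
  -- STEP 2
  have hJnn : ∀ t, 0 ≤ t → ∀ x,
      0 ≤ ∫ y, Real.exp (-μ * (inner ℝ (y - x) ξ : ℝ)) * k (y - x) * w t y := by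
    intro t ht x
    apply integral_nonneg
    intro y
    exact mul_nonneg (mul_nonneg (Real.exp_pos _).le (hknn _)) (hwnn t ht y)
  have hmono : ∀ x, MonotoneOn (fun s => Real.exp ((1 + C) * s) * w s x) (Set.Ici 0) := by
    intro x
    apply monotoneOn_of_hasDerivWithinAt_nonneg (convex_Ici 0)
      (f' := fun s => Real.exp ((1 + C) * s) * (1 + C) * w s x
        + Real.exp ((1 + C) * s) *
          ((∫ y, Real.exp (-μ * (inner ℝ (y - x) ξ : ℝ)) * k (y - x) * w s y) -
            w s x + a s x * w s x))
    · exact (Real.continuous_exp.comp (continuous_const.mul continuous_id)).continuousOn.mul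
        (hwcox x)
    · intro s hs
      rw [interior_Ici] at hs
      have hd1 : HasDerivAt (fun s' => Real.exp ((1 + C) * s'))
          (Real.exp ((1 + C) * s) * (1 + C)) s := by
        have : HasDerivAt (fun s' : ℝ => (1 + C) * s') ((1 + C) * 1) s :=
          (hasDerivAt_id s).const_mul (1 + C)
        simpa using this.exp
      have hdw : HasDerivAt (fun s' => w s' x)
          ((∫ y, Real.exp (-μ * (inner ℝ (y - x) ξ : ℝ)) * k (y - x) * w s y) -
            w s x + a s x * w s x) s :=
        (hwd x s hs.le).hasDerivAt (Ici_mem_nhds hs)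
      exact (hd1.mul hdw).hasDerivWithinAt
    · intro s hs
      rw [interior_Ici] at hs
      have h1 := hJnn s hs.le x
      have h2 := hwnn s hs.le x
      have h3 := (haC s x).1
      have hE := (Real.exp_pos ((1 + C) * s)).le
      nlinarith [mul_nonneg (mul_nonneg hE (by linarith : 0 ≤ C + a s x)) h2,
        mul_nonneg hE h1]
  -- point of strict positivity at t = 0
  obtain ⟨x₀, hx₀⟩ : ∃ x₀, 0 < w 0 x₀ := by
    by_contra hcon
    push_neg at hcon
    apply hne
    funext x
    have h1 := hle x
    have h2 := hcon x
    simp only [hw, hinit₁, hinit₂] at h2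
    linarith
  intro t ht
  -- zero set
  set Z : Set (EuclideanSpace ℝ (Fin N)) := {x | w t x = 0} with hZ
  have hZclosed : IsClosed Z := isClosed_eq (hwct t ht.le) continuous_const
  have hzero_back : ∀ x ∈ Z, ∀ s ∈ Set.Icc (0:ℝ) t, w s x = 0 := by
    intro x hx s hs
    have h1 := hmono x (Set.mem_Ici.mpr hs.1) (Set.mem_Ici.mpr (le_trans hs.1 hs.2)) hs.2
    dsimp only at h1
    have hxz : w t x = 0 := hx
    rw [hxz] at h1
    have h2 := hwnn s hs.1 x
    have hE := Real.exp_pos ((1 + C) * s)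
    nlinarith
  have hball : ∀ x ∈ Z, ∀ y ∈ Metric.ball x r₀, y ∈ Z := by
    intro x hx y hy
    have hJ0 : ∀ s ∈ Set.Ico (0:ℝ) t,
        (∫ y', Real.exp (-μ * (inner ℝ (y' - x) ξ : ℝ)) * k (y' - x) * w s y') = 0 := by
      intro s hs
      have hd := hwd x s hs.1
      rw [hzero_back x hx s ⟨hs.1, hs.2.le⟩] at hd
      simp only [mul_zero, sub_zero, add_zero] at hd
      have hd2 : HasDerivWithinAt (fun s' => w s' x)
          (∫ y', Real.exp (-μ * (inner ℝ (y' - x) ξ : ℝ)) * k (y' - x) * w s y')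
          (Set.Icc s t) s :=
        hd.mono (fun r hr => le_trans hs.1 hr.1)
      have hzero : ∀ r ∈ Set.Icc s t, w r x = 0 :=
        fun r hr => hzero_back x hx r ⟨le_trans hs.1 hr.1, hr.2⟩
      have hd3 : HasDerivWithinAt (fun _ : ℝ => (0:ℝ))
          (∫ y', Real.exp (-μ * (inner ℝ (y' - x) ξ : ℝ)) * k (y' - x) * w s y')
          (Set.Icc s t) s := by
        apply hd2.congr
        · intro r hr; exact (hzero r hr).symm
        · exact (hzero s ⟨le_refl s, hs.2.le⟩).symm
      have hd4 : HasDerivWithinAt (fun _ : ℝ => (0:ℝ)) 0 (Set.Icc s t) s :=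
        (hasDerivWithinAt_const s _ 0)
      have hu : UniqueDiffWithinAt ℝ (Set.Icc s t) s :=
        (uniqueDiffOn_Icc hs.2) s ⟨le_refl s, hs.2.le⟩
      have := hd3.derivWithin hu
      rw [← this, hd4.derivWithin hu]
    have hwy : ∀ s ∈ Set.Ico (0:ℝ) t, w s y = 0 := by
      intro s hs
      by_contra hne'
      have hpos : 0 < w s y := lt_of_le_of_ne (hwnn s hs.1 y) (Ne.symm hne')
      have hint := hInt (w s) (hwct s hs.1) x
      have hnn : ∀ y', 0 ≤ Real.exp (-μ * (inner ℝ (y' - x) ξ : ℝ)) * k (y' - x) * w s y' :=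
        fun y' => mul_nonneg (mul_nonneg (Real.exp_pos _).le (hknn _)) (hwnn s hs.1 y')
      have hpos' : 0 < ∫ y', Real.exp (-μ * (inner ℝ (y' - x) ξ : ℝ)) * k (y' - x) * w s y' := by
        rw [integral_pos_iff_support_of_nonneg hnn hint]
        have hcont := aux_ker_cont ξ μ k hkc x (w s) (hwct s hs.1)
        have hopen : IsOpen (Function.support fun y' =>
            Real.exp (-μ * (inner ℝ (y' - x) ξ : ℝ)) * k (y' - x) * w s y') :=
          hcont.isOpen_support
        apply hopen.measure_pos volume
        refine ⟨y, ?_⟩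
        have hky : 0 < k (y - x) := by
          apply hkpos
          rw [Metric.mem_ball, dist_eq_norm] at hy
          exact hy
        have : 0 < Real.exp (-μ * (inner ℝ (y - x) ξ : ℝ)) * k (y - x) * w s y :=
          mul_pos (mul_pos (Real.exp_pos _) hky) hpos
        exact ne_of_gt this
      rw [hJ0 s hs] at hpos'
      exact lt_irrefl 0 hpos'
    -- limit s → t
    have hfin : w t y = 0 := by
      have hEq : Set.EqOn (fun s => w (max s 0) y) (fun _ => (0:ℝ)) (Set.Ioo 0 t) := by
        intro s hs
        simp only
        rw [max_eq_left hs.1.le]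
        exact hwy s ⟨hs.1.le, hs.2⟩
      have hEqc : Set.EqOn (fun s => w (max s 0) y) (fun _ => (0:ℝ))
          (closure (Set.Ioo 0 t)) :=
        hEq.closure (hwcx y) continuous_const
      have htmem : t ∈ closure (Set.Ioo 0 t) := by
        rw [closure_Ioo (ne_of_lt ht)]
        exact ⟨ht.le, le_refl t⟩
      have := hEqc htmem
      simpa [max_eq_left ht.le] using this
    exact hfin
  have hZopen : IsOpen Z := by
    rw [isOpen_iff_mem_nhds]
    intro x hx
    exact Filter.mem_of_superset (Metric.ball_mem_nhds x hr₀) (fun y hy => hball x hx y hy)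
  intro x
  rcases eq_or_lt_of_le (hwnn t ht.le x) with heq0 | hlt
  · exfalso
    have hxZ : x ∈ Z := heq0.symm
    have hZuniv : Z = Set.univ := by
      rcases isClopen_iff.mp ⟨hZclosed, hZopen⟩ with hempty | huniv
      · exact absurd (hempty ▸ hxZ) (Set.notMem_empty x)
      · exact huniv
    have hx₀Z : x₀ ∈ Z := hZuniv ▸ Set.mem_univ x₀
    have := hzero_back x₀ hx₀Z 0 ⟨le_refl 0, ht.le⟩
    rw [this] at hx₀
    exact lt_irrefl 0 hx₀
  · have : 0 < u₂ t x - u₁ t x := hlt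
    linarith
end

section
/- Let w : [0,T]×ℝ^N → ℝ be continuous with w(0,·) ≥ 0 satisfying the integral inequality w(t,x) ≥ w(0,x) + ∫₀ᵗ [ (𝒦₀w)(s,x) + c(s,x) w(s,x) ] ds for all t ∈ [0,T], x ∈ ℝ^N, where (𝒦₀w)(s,x) = ∫k(y−x)w(s,y)dy with k ≥ 0 integrable, c is bounded with c(s,x) ≥ 0, and w is bounded below. Then w(t,x) ≥ 0 for all t ∈ [0,T], x ∈ ℝ^N. -/
open MeasureTheory

/-- Positivity lemma: if `w` is continuous, bounded below, `w(0,·) ≥ 0`, and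
`w(t,x) ≥ w(0,x) + ∫₀ᵗ [(𝒦₀w)(s,x) + c(s,x) w(s,x)] ds` with `k ≥ 0` integrable and
`c ≥ 0` bounded, then `w ≥ 0` on `[0,T] × ℝ^N`. -/
theorem positivity_from_integral_inequality {N : ℕ} (T : ℝ) (hT : 0 < T)
    (k : EuclideanSpace ℝ (Fin N) → ℝ) (hknn : ∀ z, 0 ≤ k z) (hkint : Integrable k)
    (c : ℝ → EuclideanSpace ℝ (Fin N) → ℝ)
    (hcnn : ∀ s x, 0 ≤ c s x) (hcb : ∃ C : ℝ, ∀ s x, |c s x| ≤ C)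
    (w : ℝ → EuclideanSpace ℝ (Fin N) → ℝ)
    (hwc : ContinuousOn (fun q : ℝ × EuclideanSpace ℝ (Fin N) => w q.1 q.2)
      (Set.Icc 0 T ×ˢ Set.univ))
    (hwlb : ∃ b : ℝ, ∀ t ∈ Set.Icc (0 : ℝ) T, ∀ x, -b ≤ w t x)
    (hw0 : ∀ x, 0 ≤ w 0 x)
    (hineq : ∀ t ∈ Set.Icc (0 : ℝ) T, ∀ x,
      w 0 x + ∫ s in (0 : ℝ)..t, ((∫ y, k (y - x) * w s y) + c s x * w s x) ≤ w t x) :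
    ∀ t ∈ Set.Icc (0 : ℝ) T, ∀ x, 0 ≤ w t x := by
  obtain ⟨b0, hb0⟩ := hwlb
  obtain ⟨C, hC⟩ := hcb
  set b : ℝ := max b0 0 with hbdef
  have hbnn : (0:ℝ) ≤ b := le_max_right _ _
  have hwb : ∀ t ∈ Set.Icc (0:ℝ) T, ∀ x, -b ≤ w t x := by
    intro t ht x
    exact le_trans (neg_le_neg (le_max_left _ _)) (hb0 t ht x)
  have hCnn : (0:ℝ) ≤ C := le_trans (abs_nonneg _) (hC 0 0)
  have hkInn : (0:ℝ) ≤ ∫ y, k y := integral_nonneg hknn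
  set K : ℝ := (∫ y, k y) + C with hKdef
  have hKnn : (0:ℝ) ≤ K := by positivity
  -- main induction
  have key : ∀ n : ℕ, ∀ t ∈ Set.Icc (0:ℝ) T, ∀ x,
      -(b * (K * t) ^ n / n.factorial) ≤ w t x := by
    intro n
    induction n with
    | zero =>
      intro t ht x
      simpa using hwb t ht x
    | succ n ih =>
      intro t ht x
      have ht0 : (0:ℝ) ≤ t := ht.1
      -- bound the integrand pointwise on [0, t]
      have hF : ∀ s ∈ Set.Icc (0:ℝ) t,
          -(b * K ^ (n+1) / n.factorial) * s ^ n
            ≤ (∫ y, k (y - x) * w s y) + c s x * w s x := by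
        intro s hs
        have hsT : s ∈ Set.Icc (0:ℝ) T := ⟨hs.1, le_trans hs.2 ht.2⟩
        set a : ℝ := b * (K * s) ^ n / n.factorial with hadef
        have hann : 0 ≤ a := by
          have : (0:ℝ) ≤ K * s := mul_nonneg hKnn hs.1
          positivity
        have hwa : ∀ y, -a ≤ w s y := fun y => ih s hsT y
        -- inner integral bound
        have hinner : -(a * ∫ y, k y) ≤ ∫ y, k (y - x) * w s y := by
          by_cases hint : Integrable (fun y => k (y - x) * w s y)
          · have hkx : Integrable (fun y => k (y - x)) := hkint.comp_sub_right x
            have hg : Integrable (fun y => (-a) * k (y - x)) := hkx.const_mul (-a)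
            have hmono : ∀ y, (-a) * k (y - x) ≤ k (y - x) * w s y := by
              intro y
              have h1 : k (y - x) * (-a) ≤ k (y - x) * w s y :=
                mul_le_mul_of_nonneg_left (hwa y) (hknn (y - x))
              linarith [h1, mul_comm (k (y - x)) (-a)]
            have := integral_mono hg hint hmono
            calc -(a * ∫ y, k y) = ∫ y, (-a) * k (y - x) := by
                  rw [integral_const_mul]
                  rw [integral_sub_right_eq_self (fun y => k y) x]
                  ring
              _ ≤ _ := this
          · rw [integral_undef hint]
            have : 0 ≤ a * ∫ y, k y := mul_nonneg hann hkInn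
            linarith
        have hcterm : -(C * a) ≤ c s x * w s x := by
          have h1 : c s x * (-a) ≤ c s x * w s x :=
            mul_le_mul_of_nonneg_left (hwa x) (hcnn s x)
          have h2 : c s x * a ≤ C * a :=
            mul_le_mul_of_nonneg_right (le_trans (le_abs_self _) (hC s x)) hann
          nlinarith
        have hcomb : -(a * K) ≤ (∫ y, k (y - x) * w s y) + c s x * w s x := by
          have : -(a * K) = -(a * ∫ y, k y) + -(C * a) := by rw [hKdef]; ring
          linarith
        have heq : -(b * K ^ (n+1) / n.factorial) * s ^ n = -(a * K) := by
          rw [hadef, mul_pow]; ring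
        linarith [hcomb, heq.le]
      -- interval integral bound
      have hint_lb : -(b * (K * t) ^ (n+1) / (n+1).factorial)
          ≤ ∫ s in (0:ℝ)..t, ((∫ y, k (y - x) * w s y) + c s x * w s x) := by
        by_cases hFi : IntervalIntegrable
            (fun s => (∫ y, k (y - x) * w s y) + c s x * w s x) volume 0 t
        · have hgint : IntervalIntegrable
              (fun s => -(b * K ^ (n+1) / n.factorial) * s ^ n) volume 0 t :=
            (Continuous.intervalIntegrable (by continuity) 0 t)
          have hmono := intervalIntegral.integral_mono_on ht0 hgint hFi hF
          have hcalc : ∫ s in (0:ℝ)..t, -(b * K ^ (n+1) / n.factorial) * s ^ n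
              = -(b * (K * t) ^ (n+1) / (n+1).factorial) := by
            rw [intervalIntegral.integral_const_mul, integral_pow]
            have hfac : ((n+1).factorial : ℝ) = (n+1) * n.factorial := by
              rw [Nat.factorial_succ]; push_cast; ring
            have hne : ((n:ℝ) + 1) ≠ 0 := by positivity
            have hne2 : (n.factorial : ℝ) ≠ 0 := by positivity
            rw [mul_pow, hfac]
            field_simp
            ring
          linarith [hmono, hcalc.le]
        · rw [intervalIntegral.integral_undef hFi]
          have hKt : (0:ℝ) ≤ K * t := mul_nonneg hKnn ht0
          have : (0:ℝ) ≤ b * (K * t) ^ (n+1) / (n+1).factorial := by positivity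
          linarith
      have := hineq t ht x
      have h0 := hw0 x
      linarith
  -- pass to the limit
  intro t ht x
  have hlim : Filter.Tendsto (fun n : ℕ => -(b * (K * t) ^ n / n.factorial))
      Filter.atTop (nhds 0) := by
    have h1 : Filter.Tendsto (fun n : ℕ => (K * t) ^ n / n.factorial)
        Filter.atTop (nhds 0) := FloorSemiring.tendsto_pow_div_factorial_atTop (K * t)
    have h2 := (h1.const_mul (-b))
    simpa [mul_div_assoc, neg_mul] using h2
  exact le_of_tendsto' hlim (fun n => key n t ht x)
end
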